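/- If λ and μ are partitions of n and φ : G_λ → G_μ is an isomorphism of signed, colored graphs between the standard dual equivalence graphs, then λ = μ and φ is the identity map. In particular, the standard dual equivalence graphs are pairwise non-isomorphic and have no nontrivial automorphisms. -/

import Mathlib

open scoped Classical

noncomputable section

/-! ### Signed, colored graphs -/

/-- A signed, colored graph of type `(n, N)`: a vertex set `V`, a signature
function `σ : V → {±1}^(N-1)` (encoded as a function `ℕ → ℤ` whose values are `±1`
for `1 ≤ i ≤ N-1`), and for each `1 < i < n` a set of edges `E_i` (encoded as a
symmetric irreflexive relation). -/
structure SCG (V : Type) (n N : ℕ) where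
  sgn : V → ℕ → ℤ
  edge : ℕ → V → V → Prop
  sgn_pm : ∀ v i, 1 ≤ i → i < N → sgn v i = 1 ∨ sgn v i = -1
  edge_symm : ∀ i v w, edge i v w → edge i w v
  edge_ne : ∀ i v w, edge i v w → v ≠ w
  edge_supp : ∀ i v w, edge i v w → 1 < i ∧ i < n

namespace SCG

variable {V W : Type} {n N n' N' : ℕ}

/-- Reachability using edges whose colors lie in `S`. -/
def ReachS (G : SCG V n N) (S : Set ℕ) (v w : V) : Prop :=
  Relation.ReflTransGen (fun a b => ∃ i ∈ S, G.edge i a b) v w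

/-- Reachability using all edges. -/
def Reach (G : SCG V n N) (v w : V) : Prop :=
  Relation.ReflTransGen (fun a b => ∃ i, G.edge i a b) v w

/-- The connected component of `v0`, as a signed colored graph. -/
def component (G : SCG V n N) (v0 : V) : SCG {v : V // G.Reach v0 v} n N where
  sgn v := G.sgn v.1
  edge i v w := G.edge i v.1 w.1
  sgn_pm v := G.sgn_pm v.1
  edge_symm i v w h := G.edge_symm i v.1 w.1 h
  edge_ne i v w h hvw := G.edge_ne i v.1 w.1 h (congrArg Subtype.val hvw)
  edge_supp i v w h := G.edge_supp i v.1 w.1 h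

/-- The `(m, M)`-restriction of a signed colored graph: keep the vertex set,
truncate the signature (i.e. only promise values on `1 ≤ i ≤ M-1`), and
keep only the edges `E_2, …, E_(m-1)`. -/
def restrict (G : SCG V n N) (m M : ℕ) (hm : m ≤ n) (hM : M ≤ N) : SCG V m M where
  sgn := G.sgn
  edge i v w := i < m ∧ G.edge i v w
  sgn_pm v i h1 h2 := G.sgn_pm v i h1 (lt_of_lt_of_le h2 hM)
  edge_symm i v w h := ⟨h.1, G.edge_symm i v w h.2⟩
  edge_ne i v w h := G.edge_ne i v w h.2
  edge_supp i v w h := ⟨(G.edge_supp i v w h.2).1, h.1⟩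

/-- A morphism of signed colored graphs of the same type: preserves all
signature coordinates and all colored edges. -/
def IsMorphism (G : SCG V n N) (H : SCG W n N) (φ : V → W) : Prop :=
  (∀ v i, 1 ≤ i → i < N → H.sgn (φ v) i = G.sgn v i) ∧
  ∀ i v w, G.edge i v w → H.edge i (φ v) (φ w)

/-- Isomorphism of signed colored graphs: a bijective morphism. -/
def Isomorphic (G : SCG V n N) (H : SCG W n N) : Prop :=
  ∃ φ : V → W, IsMorphism G H φ ∧ Function.Bijective φ

/-- An isomorphism of edge-colored graphs between the connected component of `v0`
in `G` using the colors in `S`, and the connected component of `u0` in `H` using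
the colors `r '' S`, matching each color `i ∈ S` with the color `r i`. -/
def ColorIso (G : SCG V n N) (v0 : V) (H : SCG W n' N') (u0 : W)
    (r : ℕ → ℕ) (S : Set ℕ) : Prop :=
  ∃ f : {v : V // G.ReachS S v0 v} → {u : W // H.ReachS (r '' S) u0 u},
    Function.Bijective f ∧ ∀ i ∈ S, ∀ a b, G.edge i a.1 b.1 ↔ H.edge (r i) (f a).1 (f b).1

/-- Dual equivalence axiom 1. -/
def Ax1 (G : SCG V n N) : Prop :=
  ∀ i, 1 < i → i < n → ∀ w, (G.sgn w (i - 1) = -G.sgn w i ↔ ∃! x, G.edge i w x)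

/-- Dual equivalence axiom 2. -/
def Ax2 (G : SCG V n N) : Prop :=
  ∀ i v w, G.edge i v w →
    G.sgn v (i - 1) = -G.sgn w (i - 1) ∧ G.sgn v i = -G.sgn w i ∧
      ∀ h, h + 2 < i ∨ i + 1 < h → G.sgn v h = G.sgn w h

/-- Dual equivalence axiom 3. -/
def Ax3 (G : SCG V n N) : Prop :=
  ∀ i v w, G.edge i v w →
    (G.sgn v (i - 2) = -G.sgn w (i - 2) → G.sgn v (i - 2) = -G.sgn v (i - 1)) ∧
    (G.sgn v (i + 1) = -G.sgn w (i + 1) → G.sgn v (i + 1) = -G.sgn v i)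

/-- Dual equivalence axiom 5. -/
def Ax5 (G : SCG V n N) : Prop :=
  ∀ i j w x y, G.edge i w x → G.edge j x y → i + 3 ≤ j ∨ j + 3 ≤ i →
    ∃ v, G.edge j w v ∧ G.edge i v y

/-- Dual equivalence axiom 6 : any two vertices of a connected component of
`E_2 ∪ ⋯ ∪ E_i` may be joined by a path crossing at most one `E_i` edge. -/
def Ax6 (G : SCG V n N) : Prop :=
  ∀ i, 1 < i → i < n → ∀ v w : V, G.ReachS (Set.Icc 2 i) v w →
    ∃ u u', G.ReachS (Set.Icc 2 (i - 1)) v u ∧ (u = u' ∨ G.edge i u u') ∧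
      G.ReachS (Set.Icc 2 (i - 1)) u' w

end SCG

/-! ### Standard Young tableaux and the standard dual equivalence graph -/

/-- A standard Young tableau of shape `μ`, recorded by the function sending
`k : Fin μ.card` to the cell containing the entry `k+1`.  (Cells are in matrix
coordinates `(row, column)`; entries increase along rows and along columns.) -/
structure SYT (μ : YoungDiagram) where
  cellOf : Fin μ.card → ℕ × ℕ
  mem_cells : ∀ k, cellOf k ∈ μ.cells
  inj : Function.Injective cellOf
  row_mono : ∀ k l, (cellOf k).1 = (cellOf l).1 → (cellOf k).2 < (cellOf l).2 → k < l
  col_mono : ∀ k l, (cellOf k).2 = (cellOf l).2 → (cellOf k).1 < (cellOf l).1 → k < l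

instance (μ : YoungDiagram) : Finite (SYT μ) := by
  apply Finite.of_injective
    (fun T : SYT μ => fun k => (⟨T.cellOf k, T.mem_cells k⟩ : {x : ℕ × ℕ // x ∈ μ.cells}))
  intro T U h
  cases T; cases U
  simp only [SYT.mk.injEq]
  funext k
  exact congrArg Subtype.val (congrFun h k)

/-- The content of a cell: `column - row`. -/
def cellContent (x : ℕ × ℕ) : ℤ := (x.2 : ℤ) - (x.1 : ℤ)

/-- `x` comes before `y` in the content reading order: smaller content first,
and within a diagonal, southwest to northeast. -/
def readBefore (x y : ℕ × ℕ) : Prop :=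
  cellContent x < cellContent y ∨ (cellContent x = cellContent y ∧ x.2 < y.2)

/-- The cell containing the entry `a` (for `1 ≤ a ≤ μ.card`). -/
def SYT.cell {μ : YoungDiagram} (T : SYT μ) (a : ℕ) : ℕ × ℕ :=
  if h : 1 ≤ a ∧ a ≤ μ.card then T.cellOf ⟨a - 1, by omega⟩ else (0, 0)

/-- The descent signature of a standard tableau: `σ(T)_i = +1` iff `i` appears
before `i+1` in the content reading word. -/
def sytSgn {μ : YoungDiagram} (T : SYT μ) : ℕ → ℤ := fun i =>
  if readBefore (T.cell i) (T.cell (i + 1)) then 1 else -1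

/-- The entry `b` lies between the entries `a` and `c` in the content reading
word of `T`. -/
def posBetween {μ : YoungDiagram} (T : SYT μ) (a b c : ℕ) : Prop :=
  (readBefore (T.cell a) (T.cell b) ∧ readBefore (T.cell b) (T.cell c)) ∨
  (readBefore (T.cell c) (T.cell b) ∧ readBefore (T.cell b) (T.cell a))

/-- `U` is obtained from `T` by exchanging the cells of the entries `a`, `b`. -/
def swapEq {μ : YoungDiagram} (T U : SYT μ) (a b : ℕ) : Prop :=
  ∀ x, 1 ≤ x → x ≤ μ.card →
    U.cell x = if x = a then T.cell b else if x = b then T.cell a else T.cell x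

/-- The elementary dual equivalence for `i-1, i, i+1`: the middle letter (in
reading order) of `i-1, i, i+1` is not `i`, and the outer two letters are
exchanged. -/
def stdEdgeCore (μ : YoungDiagram) (i : ℕ) (T U : SYT μ) : Prop :=
  1 < i ∧ i < μ.card ∧
    ((posBetween T i (i + 1) (i - 1) ∧ swapEq T U (i - 1) i) ∨
     (posBetween T i (i - 1) (i + 1) ∧ swapEq T U i (i + 1)))

/-- The standard dual equivalence graph `G_μ` for a partition `μ` of `n`. -/
def stdDEG (n : ℕ) (μ : YoungDiagram) (hcard : μ.card = n) : SCG (SYT μ) n n where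
  sgn T := sytSgn T
  edge i T U := T ≠ U ∧ (stdEdgeCore μ i T U ∨ stdEdgeCore μ i U T)
  sgn_pm := by
    intro v i _ _
    simp only [sytSgn]
    split
    · exact Or.inl rfl
    · exact Or.inr rfl
  edge_symm := by
    rintro i T U ⟨h1, h2⟩
    exact ⟨h1.symm, h2.symm⟩
  edge_ne := fun i T U h => h.1
  edge_supp := by
    rintro i T U ⟨h1, h2 | h2⟩ <;> exact ⟨h2.1, hcard ▸ h2.2.1⟩

namespace SCG

variable {V W : Type} {n N : ℕ}

/-- Dual equivalence axiom 4 : every connected component of `E_(i-1) ∪ E_i` is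
isomorphic, as an edge-colored graph, to a connected component of the
restriction to colors `{2,3}` (relabelled `i-1, i`) of a standard dual
equivalence graph `G_μ` with `μ ⊢ 4`; and similarly for three colors and
partitions of `5`. -/
def Ax4 (G : SCG V n N) : Prop :=
  (∀ i, 2 < i → i < n → ∀ v0 : V, ∃ (μ : YoungDiagram) (h4 : μ.card = 4) (T0 : SYT μ),
      G.ColorIso v0 (stdDEG 4 μ h4) T0 (· + 3 - i) {i - 1, i}) ∧
  (∀ i, 3 < i → i < n → ∀ v0 : V, ∃ (μ : YoungDiagram) (h5 : μ.card = 5) (T0 : SYT μ),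
      G.ColorIso v0 (stdDEG 5 μ h5) T0 (· + 4 - i) {i - 2, i - 1, i})

/-- A dual equivalence graph of type `(n,N)`. -/
def IsDEG (G : SCG V n N) : Prop :=
  n ≤ N ∧ G.Ax1 ∧ G.Ax2 ∧ G.Ax3 ∧ G.Ax4 ∧ G.Ax5 ∧ G.Ax6

end SCG

/-! ### Quasisymmetric functions and Schur functions -/

/-- Gessel's fundamental quasisymmetric function `Q_σ` of degree `n`, for a
signature `s` (with `s j` the sign `σ_j` for `1 ≤ j ≤ n-1`), as a formal power
series in the variables `x_0, x_1, x_2, …` (representing `x_1, x_2, …`).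
It is the sum of `x_(i_1) ⋯ x_(i_n)` over weakly increasing sequences
`i_1 ≤ ⋯ ≤ i_n` such that `i_j = i_(j+1)` forces `σ_j = +1`. -/
def Qfun (R : Type) [CommRing R] (n : ℕ) (s : ℕ → ℤ) : MvPowerSeries ℕ R := fun d =>
  ((Set.ncard {f : Fin n → ℕ | Monotone f ∧
      (∀ (j : ℕ) (hj : j < n), 1 ≤ j → f ⟨j - 1, by omega⟩ = f ⟨j, hj⟩ → s j = 1) ∧
      ∑ k : Fin n, Finsupp.single (f k) 1 = d} : ℕ) : R)

/-- The Schur function `s_μ = Σ_(T ∈ SYT(μ)) Q_(σ(T))`. -/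
def schurPS (R : Type) [CommRing R] (μ : YoungDiagram) : MvPowerSeries ℕ R :=
  ∑ᶠ T : SYT μ, Qfun R μ.card (sytSgn T)

/-- Symmetry of a formal power series in `x_0, x_1, …`: invariance of the
coefficients under every permutation of the variables. -/
def MvPSSymmetric {R : Type} [CommRing R] (F : MvPowerSeries ℕ R) : Prop :=
  ∀ (g : Equiv.Perm ℕ) (d : ℕ →₀ ℕ),
    MvPowerSeries.coeff (Finsupp.equivMapDomain g d) F = MvPowerSeries.coeff d F

/-- Schur positivity: `F` is a nonnegative integer combination of Schur functions. -/
def SchurPositive (F : MvPowerSeries ℕ ℤ) : Prop :=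
  ∃ a : YoungDiagram → ℕ, (Function.support a).Finite ∧
    F = ∑ᶠ μ : YoungDiagram, (a μ : ℤ) • schurPS ℤ μ

/-! ### Words, ribbon words and the LLT graphs -/

/-- A standard word of length `n`: a bijection from positions `1,…,n` to
letters `1,…,n` (and `0` outside this range). -/
def IsStdWord (n : ℕ) (w : ℕ → ℕ) : Prop :=
  Set.BijOn w (Set.Icc 1 n) (Set.Icc 1 n) ∧ ∀ p, p ∉ Set.Icc 1 n → w p = 0

/-- A word of positive integers of length `n`. -/
def IsPosWord (n : ℕ) (w : ℕ → ℕ) : Prop :=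
  (∀ p ∈ Set.Icc 1 n, 1 ≤ w p) ∧ ∀ p, p ∉ Set.Icc 1 n → w p = 0

/-- The `k`-descent set of the pair `(w, c)` (as a set of pairs of positions). -/
def DesK (k n : ℕ) (w : ℕ → ℕ) (c : ℕ → ℤ) : Set (ℕ × ℕ) :=
  {pq : ℕ × ℕ | pq.1 ∈ Set.Icc 1 n ∧ pq.2 ∈ Set.Icc 1 n ∧ w pq.2 < w pq.1 ∧
    c pq.2 - c pq.1 = (k : ℤ)}

/-- The set of `k`-inversions of the pair `(w, c)`. -/
def InvK (k n : ℕ) (w : ℕ → ℕ) (c : ℕ → ℤ) : Set (ℕ × ℕ) :=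
  {pq : ℕ × ℕ | pq.1 ∈ Set.Icc 1 n ∧ pq.2 ∈ Set.Icc 1 n ∧ w pq.2 < w pq.1 ∧
    0 < c pq.2 - c pq.1 ∧ c pq.2 - c pq.1 < (k : ℤ)}

/-- The `k`-inversion number of `(w, c)`. -/
def invK (k n : ℕ) (w : ℕ → ℕ) (c : ℕ → ℤ) : ℕ := (InvK k n w c).ncard

/-- The pair `(w, c)` is a `k`-ribbon word. -/
def IsRibbonWord (k n : ℕ) (w : ℕ → ℕ) (c : ℕ → ℤ) : Prop :=
  ∀ p, 1 ≤ p → p + 1 ≤ n → c p = c (p + 1) →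
    (∃ h, h ∈ Set.Icc 1 n ∧ c h = c p - (k : ℤ) ∧ w p < w h ∧ w h ≤ w (p + 1)) ∧
    (∃ j, j ∈ Set.Icc 1 n ∧ c j = c p + (k : ℤ) ∧ w p ≤ w j ∧ w j < w (p + 1))

/-- The letter `a` appears to the left of the letter `b` in the word `w`. -/
def leftOf (n : ℕ) (w : ℕ → ℕ) (a b : ℕ) : Prop :=
  ∃ p q, p ∈ Set.Icc 1 n ∧ q ∈ Set.Icc 1 n ∧ p < q ∧ w p = a ∧ w q = b

/-- The descent signature of a word: `σ(w)_i = +1` iff `i` is left of `i+1`. -/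
def wordSgn (n : ℕ) (w : ℕ → ℕ) : ℕ → ℤ := fun i =>
  if leftOf n w i (i + 1) then 1 else -1

/-- The position of the letter `ℓ` in the word `w`. -/
def posOf (n : ℕ) (w : ℕ → ℕ) (ℓ : ℕ) : ℕ := sInf {p | p ∈ Set.Icc 1 n ∧ w p = ℓ}

/-- The involution `D_i^(k)` on standard words: if `i` lies between `i-1` and
`i+1` do nothing; otherwise apply `d_i` (switch the outer two of the letters
`i-1, i, i+1`) when `dist(i-1,i,i+1) > k`, and `d̃_i` (cycle the three letters
among their positions) when `dist(i-1,i,i+1) ≤ k`. -/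
def Dk (k n : ℕ) (c : ℕ → ℤ) (i : ℕ) (w : ℕ → ℕ) : ℕ → ℕ :=
  let p := posOf n w (i - 1)
  let q := posOf n w i
  let r := posOf n w (i + 1)
  if (p < q ∧ q < r) ∨ (r < q ∧ q < p) then w
  else
    let s1 := min p (min q r)
    let s3 := max p (max q r)
    let s2 := p + q + r - s1 - s3
    if (k : ℤ) < max |c p - c q| (max |c q - c r| |c p - c r|) then
      fun t => if t = s1 then w s3 else if t = s3 then w s1 else w t
    else if q = s1 then
      fun t => if t = s1 then w s2 else if t = s2 then w s3 else if t = s3 then w s1 else w t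
    else
      fun t => if t = s1 then w s3 else if t = s2 then w s1 else if t = s3 then w s2 else w t

/-- The vertex set `V^(k)_(c,D)`: standard `k`-ribbon words with content
vector `c` and `k`-descent set `D`. -/
def lltV (k n : ℕ) (c : ℕ → ℤ) (D : Set (ℕ × ℕ)) : Type :=
  {w : ℕ → ℕ // IsStdWord n w ∧ IsRibbonWord k n w c ∧ DesK k n w c = D}

instance lltV.finite (k n : ℕ) (c : ℕ → ℤ) (D : Set (ℕ × ℕ)) : Finite (lltV k n c D) := by
  apply Finite.of_injective
    (fun w : lltV k n c D => fun p : Fin (n + 1) => (⟨w.1 p, by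
      rcases Classical.em ((p : ℕ) ∈ Set.Icc 1 n) with h | h
      · exact Nat.lt_succ_of_le (w.2.1.1.mapsTo h).2
      · simp [w.2.1.2 _ h]⟩ : Fin (n + 1)))
  intro a b hab
  apply Subtype.ext
  funext p
  by_cases hp : p ∈ Set.Icc 1 n
  · have hlt : p < n + 1 := Nat.lt_succ_of_le hp.2
    exact congrArg Fin.val (congrFun hab ⟨p, hlt⟩)
  · rw [a.2.1.2 _ hp, b.2.1.2 _ hp]

/-- The signed, colored graph `G^(k)_(c,D)` on standard `k`-ribbon words with
content vector `c` and `k`-descent set `D`, with `i`-edges the pairs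
`{w, D_i^(k)(w)}` over vertices `w` admitting an `i`-neighbor. -/
def lltGraph (k n : ℕ) (c : ℕ → ℤ) (D : Set (ℕ × ℕ)) : SCG (lltV k n c D) n n where
  sgn w := wordSgn n w.1
  edge i v u := 1 < i ∧ i < n ∧ v ≠ u ∧
    ((wordSgn n v.1 (i - 1) = -wordSgn n v.1 i ∧ u.1 = Dk k n c i v.1) ∨
     (wordSgn n u.1 (i - 1) = -wordSgn n u.1 i ∧ v.1 = Dk k n c i u.1))
  sgn_pm := by
    intro v i _ _
    simp only [wordSgn]
    split
    · exact Or.inl rfl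
    · exact Or.inr rfl
  edge_symm := by
    rintro i v u ⟨h1, h2, h3, h4⟩
    exact ⟨h1, h2, h3.symm, h4.symm⟩
  edge_ne := fun i v u h => h.2.2.1
  edge_supp := fun i v u h => ⟨h.1, h.2.1⟩

/-- The descent set of a word. -/
def DesSet (n : ℕ) (w : ℕ → ℕ) : Finset ℕ :=
  (Finset.Icc 1 (n - 1)).filter fun p => w (p + 1) < w p

/-- The (skew) Schur function of the ribbon of size `n` whose descent set is
`E`, via its quasisymmetric expansion. -/
def ribbonSchurGF (n : ℕ) (E : Finset ℕ) : MvPowerSeries ℕ ℤ :=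
  ∑ᶠ w : {w : ℕ → ℕ // IsStdWord n w ∧ DesSet n w = E}, Qfun ℤ n (wordSgn n w.1)

/-! ### Tuples of skew tableaux and LLT polynomials -/

/-- A finite set of cells forming a skew shape `λ/ν`. -/
def IsSkewShape (S : Finset (ℕ × ℕ)) : Prop :=
  ∃ lam nu : YoungDiagram, nu ≤ lam ∧ S = lam.cells \ nu.cells

/-- A semistandard filling of the cell set `S`: positive entries on `S`, zero
elsewhere, weakly increasing along rows and strictly increasing along columns. -/
def SemistdOn (S : Finset (ℕ × ℕ)) (T : ℕ × ℕ → ℕ) : Prop :=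
  (∀ x ∈ S, 1 ≤ T x) ∧ (∀ x, x ∉ S → T x = 0) ∧
  (∀ r c1 c2, (r, c1) ∈ S → (r, c2) ∈ S → c1 ≤ c2 → T (r, c1) ≤ T (r, c2)) ∧
  (∀ r1 r2 cc, (r1, cc) ∈ S → (r2, cc) ∈ S → r1 < r2 → T (r1, cc) < T (r2, cc))

/-- A `k`-tuple of semistandard tableaux of shapes `S 0, …, S (k-1)`. -/
def SemistdTuple {k : ℕ} (S : Fin k → Finset (ℕ × ℕ)) (T : Fin k → ℕ × ℕ → ℕ) : Prop :=
  ∀ i, SemistdOn (S i) (T i)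

/-- The shifted content `c̃ = k·c(x) + i` of a cell `x` of the `i`-th shape. -/
def shiftedContent (k : ℕ) (x : Fin k × ℕ × ℕ) : ℤ :=
  (k : ℤ) * cellContent x.2 + (x.1 : ℤ)

/-- `e` enumerates the cells of the tuple of shapes `S` in content reading
order (increasing shifted content, southwest to northeast on diagonals). -/
def IsCellEnum (k n : ℕ) (S : Fin k → Finset (ℕ × ℕ)) (e : ℕ → Fin k × ℕ × ℕ) : Prop :=
  Set.BijOn e (Set.Icc 1 n) {ix : Fin k × ℕ × ℕ | ix.2 ∈ S ix.1} ∧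
  ∀ p q, p ∈ Set.Icc 1 n → q ∈ Set.Icc 1 n → p < q →
    (shiftedContent k (e p) < shiftedContent k (e q) ∨
     (shiftedContent k (e p) = shiftedContent k (e q) ∧ (e p).2.2 < (e q).2.2))

/-- The content reading word of a tuple `T`, via the enumeration `e`. -/
def readWord (n : ℕ) {k : ℕ} (e : ℕ → Fin k × ℕ × ℕ) (T : Fin k → ℕ × ℕ → ℕ) : ℕ → ℕ :=
  fun p => if p ∈ Set.Icc 1 n then T (e p).1 (e p).2 else 0

/-- The weight of a tuple of tableaux, as an exponent vector (the variable
`x_j` records entries equal to `j+1`). -/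
def tupleWeight {k : ℕ} (S : Fin k → Finset (ℕ × ℕ)) (T : Fin k → ℕ × ℕ → ℕ) : ℕ →₀ ℕ :=
  ∑ i : Fin k, ∑ x ∈ S i, Finsupp.single (T i x - 1) 1

/-- The number of `k`-inversions of a tuple of tableaux. -/
def invkTuple (k : ℕ) (S : Fin k → Finset (ℕ × ℕ)) (T : Fin k → ℕ × ℕ → ℕ) : ℕ :=
  Set.ncard {p : (Fin k × ℕ × ℕ) × (Fin k × ℕ × ℕ) |
    p.1.2 ∈ S p.1.1 ∧ p.2.2 ∈ S p.2.1 ∧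
    0 < shiftedContent k p.2 - shiftedContent k p.1 ∧
    shiftedContent k p.2 - shiftedContent k p.1 < (k : ℤ) ∧
    T p.2.1 p.2.2 < T p.1.1 p.1.2}

/-- The LLT polynomial `G̃^(k)_μ(x; q) = Σ_T q^(inv_k(T)) x^T`, as a formal
power series in `x` with coefficients in `ℤ[q]`. -/
def LLTpoly (k : ℕ) (S : Fin k → Finset (ℕ × ℕ)) : MvPowerSeries ℕ (Polynomial ℤ) :=
  fun d => ∑ᶠ T : {T : Fin k → ℕ × ℕ → ℕ // SemistdTuple S T ∧ tupleWeight S T = d},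
    (Polynomial.X : Polynomial ℤ) ^ invkTuple k S T.1

/-- The weight of a word. -/
def wordWeight (n : ℕ) (w : ℕ → ℕ) : ℕ →₀ ℕ :=
  ∑ p ∈ Finset.Icc 1 n, Finsupp.single (w p - 1) 1

/-- The generating function `Σ_((w,c) ∈ WRib_k(c,D)) q^(inv_k(w,c)) x^w` of all
`k`-ribbon words with content vector `c` and `k`-descent set `D`. -/
def ribbonWordGF (k n : ℕ) (c : ℕ → ℤ) (D : Set (ℕ × ℕ)) : MvPowerSeries ℕ (Polynomial ℤ) :=
  fun d => ∑ᶠ w : {w : ℕ → ℕ // IsPosWord n w ∧ IsRibbonWord k n w c ∧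
      DesK k n w c = D ∧ wordWeight n w = d},
    (Polynomial.X : Polynomial ℤ) ^ invK k n w.1 c

/-! ### Packages, types, local Schur positivity, axiom 4' and D graphs -/

namespace SCG

variable {V W : Type} {n N : ℕ}

/-- The `i`-package of a vertex: its connected component using only the edges
of colors `≤ i-3` or `≥ i+3`. -/
def packReach (G : SCG V n N) (i : ℕ) (v w : V) : Prop :=
  G.ReachS {j | j + 3 ≤ i ∨ i + 3 ≤ j} v w

/-- `w` admits a `j`-neighbor. -/
def Admits (G : SCG V n N) (j : ℕ) (w : V) : Prop := G.sgn w (j - 1) = -G.sgn w j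

/-- `w` has `i`-type W. -/
def TypeW (G : SCG V n N) (i : ℕ) (w : V) : Prop :=
  G.Admits (i - 1) w ∧ ∃ x, G.edge (i - 1) w x ∧ G.sgn x i = -G.sgn w i

/-- `w` has `i`-type A. -/
def TypeA (G : SCG V n N) (i : ℕ) (w : V) : Prop :=
  ¬G.TypeW i w ∧ ¬G.Admits (i - 2) w

/-- `w` has `i`-type B. -/
def TypeB (G : SCG V n N) (i : ℕ) (w : V) : Prop :=
  ¬G.TypeW i w ∧ G.Admits (i - 2) w ∧ ∃ x, G.edge (i - 2) w x ∧
    ((G.Admits (i - 1) w ∧ G.sgn w (i - 1) = -G.sgn x (i - 1)) ∨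
     (¬G.Admits (i - 1) w ∧ ∃ z, G.edge (i - 1) x z ∧ G.sgn w i = -G.sgn z i))

/-- `w` has `i`-type C. -/
def TypeC (G : SCG V n N) (i : ℕ) (w : V) : Prop :=
  ¬G.TypeW i w ∧ G.Admits (i - 2) w ∧ ∃ x, G.edge (i - 2) w x ∧
    ((G.Admits (i - 1) w ∧ G.sgn w (i - 1) = G.sgn x (i - 1)) ∨
     (¬G.Admits (i - 1) w ∧ ∃ z, G.edge (i - 1) x z ∧ G.sgn w i = G.sgn z i))

/-- Twice the number of edges of colors `i-1, i` in the connected component of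
`v0` under `E_(i-1) ∪ E_i` (each edge is counted once for each orientation). -/
def twoColorEdgeCount (G : SCG V n N) (i : ℕ) (v0 : V) : ℕ :=
  Set.ncard {t : ℕ × V × V | (t.1 = i - 1 ∨ t.1 = i) ∧ G.edge t.1 t.2.1 t.2.2 ∧
    G.ReachS {i - 1, i} v0 t.2.1}

/-- Axiom 4'a: every nontrivial connected component of `E_(i-1) ∪ E_i` has
either two or four edges. -/
def Ax4a (G : SCG V n N) : Prop :=
  ∀ i, 2 < i → i < n → ∀ v0 : V,
    (∃ a b j, G.ReachS {i - 1, i} v0 a ∧ (j = i - 1 ∨ j = i) ∧ G.edge j a b) →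
    G.twoColorEdgeCount i v0 = 4 ∨ G.twoColorEdgeCount i v0 = 8

/-- Axiom 4'b. -/
def Ax4b (G : SCG V n N) : Prop :=
  ∀ i, 3 < i → i < n → ∀ w x z, G.edge (i - 2) w x → G.edge i w z →
    G.sgn w (i - 1) = -G.sgn x (i - 1) → G.sgn w (i - 2) = -G.sgn z (i - 2) →
    ∃ y, G.edge (i - 1) w y ∧ (y = x ∨ y = z)

/-- Axiom 4'c. -/
def Ax4c (G : SCG V n N) : Prop :=
  ∀ i, 3 < i → i < n → ∀ w x, G.edge (i - 2) w x → G.TypeC i w → G.TypeW (i + 1) w →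
    G.TypeC i x ∧ G.TypeW (i + 1) x

/-- The restricted degree-4 signature of a vertex. -/
def sig3 (G : SCG V n N) (i : ℕ) (v : V) : ℕ → ℤ := fun j =>
  if j = 1 then G.sgn v (i - 2) else if j = 2 then G.sgn v (i - 1) else G.sgn v i

/-- The restricted degree-5 signature of a vertex. -/
def sig4 (G : SCG V n N) (i : ℕ) (v : V) : ℕ → ℤ := fun j =>
  if j = 1 then G.sgn v (i - 3) else if j = 2 then G.sgn v (i - 2)
  else if j = 3 then G.sgn v (i - 1) else G.sgn v i

/-- Local Schur positivity: the restricted degree-4 and degree-5 generating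
functions of the two- and three-color connected components are symmetric and
Schur positive. -/
def LSP (G : SCG V n N) : Prop :=
  (∀ i, 2 < i → i < n → ∀ v0 : V,
    MvPSSymmetric (∑ᶠ v : {v : V // G.ReachS {i - 1, i} v0 v}, Qfun ℤ 4 (G.sig3 i v.1)) ∧
    SchurPositive (∑ᶠ v : {v : V // G.ReachS {i - 1, i} v0 v}, Qfun ℤ 4 (G.sig3 i v.1))) ∧
  (∀ i, 3 < i → i < n → ∀ v0 : V,
    MvPSSymmetric (∑ᶠ v : {v : V // G.ReachS {i - 2, i - 1, i} v0 v}, Qfun ℤ 5 (G.sig4 i v.1)) ∧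
    SchurPositive (∑ᶠ v : {v : V // G.ReachS {i - 2, i - 1, i} v0 v}, Qfun ℤ 5 (G.sig4 i v.1)))

/-- A D graph: a locally Schur positive signed colored graph satisfying dual
equivalence axioms 1, 2, 3 and 5 together with axiom 4'. -/
def IsDGraph (G : SCG V n N) : Prop :=
  G.LSP ∧ G.Ax1 ∧ G.Ax2 ∧ G.Ax3 ∧ G.Ax5 ∧ G.Ax4a ∧ G.Ax4b ∧ G.Ax4c

/-- The set `W_i(G)` of vertices of `i`-type W whose `(i-1)`-neighbor and
`i`-neighbor differ. -/
def Wset (G : SCG V n N) (i : ℕ) : Set V :=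
  {w | G.TypeW i w ∧ ∀ x y, G.edge (i - 1) w x → G.edge i w y → x ≠ y}

/-- The set `X_i(G)` of vertices of `i`-type C with no `(i-1)`-neighbor such
that `E_(i-2) E_i ≠ E_i E_(i-2)` at the vertex. -/
def Xset (G : SCG V n N) (i : ℕ) : Set V :=
  {x | G.TypeC i x ∧ ¬G.Admits (i - 1) x ∧
    ∀ a b, (∃ z, G.edge i x z ∧ G.edge (i - 2) z a) →
      (∃ z, G.edge (i - 2) x z ∧ G.edge i z b) → a ≠ b}

/-- `f` is an isomorphism between the `i`-packages of `w` and `u`: a bijection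
preserving the truncated signature coordinates `σ_1, …, σ_(i-3), σ_(i+2), …,
σ_(N-1)` and all edges of colors `≤ i-3` or `≥ i+3`. -/
def PackIso (G : SCG V n N) (i : ℕ) (w u : V)
    (f : {v : V // G.packReach i w v} → {v : V // G.packReach i u v}) : Prop :=
  Function.Bijective f ∧
  (∀ v j, 1 ≤ j → (j + 3 ≤ i ∨ (i + 2 ≤ j ∧ j < N)) → G.sgn (f v).1 j = G.sgn v.1 j) ∧
  ∀ j, j + 3 ≤ i ∨ i + 3 ≤ j → ∀ a b, G.edge j a.1 b.1 ↔ G.edge j (f a).1 (f b).1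

/-- One half of the new `i`-edge relation used to redefine `E_i` from a package
isomorphism `f` between the `i`-packages of `w` and `u`. -/
def newEdgePhi (G : SCG V n N) (i : ℕ) (w u : V)
    (f : {v : V // G.packReach i w v} → {v : V // G.packReach i u v}) (a b : V) : Prop :=
  (∃ ha : G.packReach i w a, b = (f ⟨a, ha⟩).1) ∨
  (∃ a' b', ∃ ha' : G.packReach i w a', G.edge i a a' ∧ b' = (f ⟨a', ha'⟩).1 ∧ G.edge i b' b) ∨
  (G.edge i a b ∧ ¬G.packReach i w a ∧ ¬G.packReach i u a ∧
    ¬G.packReach i w b ∧ ¬G.packReach i u b)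

/-- The graph obtained from `G` by replacing the edges `E_i` according to the
involution determined by the package isomorphism `f` (this is `φ_i^w(G)`,
and also `ψ_i^x(G)` when applied to the appropriate packages). -/
def phiGraph (G : SCG V n N) (i : ℕ) (hi : 1 < i) (hin : i < n) (w u : V)
    (f : {v : V // G.packReach i w v} → {v : V // G.packReach i u v}) : SCG V n N where
  sgn := G.sgn
  edge j a b :=
    if j = i then a ≠ b ∧ (G.newEdgePhi i w u f a b ∨ G.newEdgePhi i w u f b a)
    else G.edge j a b
  sgn_pm := G.sgn_pm
  edge_symm := by
    intro j a b h
    by_cases hj : j = i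
    · rw [if_pos hj] at h ⊢
      exact ⟨h.1.symm, h.2.symm⟩
    · rw [if_neg hj] at h ⊢
      exact G.edge_symm j a b h
  edge_ne := by
    intro j a b h
    by_cases hj : j = i
    · rw [if_pos hj] at h; exact h.1
    · rw [if_neg hj] at h; exact G.edge_ne j a b h
  edge_supp := by
    intro j a b h
    by_cases hj : j = i
    · subst hj; exact ⟨hi, hin⟩
    · rw [if_neg hj] at h; exact G.edge_supp j a b h

end SCG

/-! ### Fillings and Macdonald polynomials via Haglund's formula -/

/-- The weight of a filling of a Young diagram. -/
def fillingWeight (ρ : YoungDiagram) (S : ℕ × ℕ → ℕ) : ℕ →₀ ℕ :=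
  ∑ x ∈ ρ.cells, Finsupp.single (S x - 1) 1

/-- The descent set of a filling: cells not in the first row whose entry
exceeds the entry immediately below (i.e. south, in French convention). -/
def macDes (ρ : YoungDiagram) (S : ℕ × ℕ → ℕ) : Set (ℕ × ℕ) :=
  {x | x ∈ ρ.cells ∧ 1 ≤ x.1 ∧ S (x.1 - 1, x.2) < S x}

/-- The arm length of a cell. -/
def armLen (ρ : YoungDiagram) (x : ℕ × ℕ) : ℕ := Set.ncard {c' | x.2 < c' ∧ (x.1, c') ∈ ρ.cells}

/-- The leg length of a cell. -/
def legLen (ρ : YoungDiagram) (x : ℕ × ℕ) : ℕ := Set.ncard {r' | x.1 < r' ∧ (r', x.2) ∈ ρ.cells}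

/-- The major index of a filling. -/
def macMaj (ρ : YoungDiagram) (S : ℕ × ℕ → ℕ) : ℕ :=
  (macDes ρ S).ncard + ∑ᶠ x ∈ macDes ρ S, legLen ρ x

/-- The set of inversion pairs (attacking pairs in reading order with the first
entry larger). -/
def macInvSet (ρ : YoungDiagram) (S : ℕ × ℕ → ℕ) : Set ((ℕ × ℕ) × (ℕ × ℕ)) :=
  {p | p.1 ∈ ρ.cells ∧ p.2 ∈ ρ.cells ∧
    ((p.1.1 = p.2.1 ∧ p.1.2 < p.2.2) ∨ (p.1.1 = p.2.1 + 1 ∧ p.2.2 < p.1.2)) ∧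
    S p.2 < S p.1}

/-- The inversion statistic of a filling. -/
def macInv (ρ : YoungDiagram) (S : ℕ × ℕ → ℕ) : ℕ :=
  (macInvSet ρ S).ncard - ∑ᶠ x ∈ macDes ρ S, armLen ρ x

/-- The transformed Macdonald polynomial via Haglund's formula
`H̃_μ(x; q, t) = Σ_S q^(inv S) t^(maj S) x^S`, with `q = X 0` and `t = X 1`. -/
def macdonald (ρ : YoungDiagram) : MvPowerSeries ℕ (MvPolynomial (Fin 2) ℤ) :=
  fun d => ∑ᶠ S : {S : ℕ × ℕ → ℕ //
      (∀ x ∈ ρ.cells, 1 ≤ S x) ∧ (∀ x, x ∉ ρ.cells → S x = 0) ∧ fillingWeight ρ S = d},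
    (MvPolynomial.X 0 : MvPolynomial (Fin 2) ℤ) ^ macInv ρ S.1 *
      (MvPolynomial.X 1 : MvPolynomial (Fin 2) ℤ) ^ macMaj ρ S.1

/-! ### Augmented standard dual equivalence graphs -/

/-- Standard tableaux of shape `ρ` augmented by the fixed filling `A` on the
entries `n+1, …, |ρ|` (the cell of the entry `v` being `A v`). -/
def AugSYT (ρ : YoungDiagram) (n : ℕ) (A : ℕ → ℕ × ℕ) : Type :=
  {T : SYT ρ // ∀ m : Fin ρ.card, n ≤ (m : ℕ) → T.cellOf m = A ((m : ℕ) + 1)}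

instance (ρ : YoungDiagram) (n : ℕ) (A : ℕ → ℕ × ℕ) : Finite (AugSYT ρ n A) := by
  unfold AugSYT; infer_instance

/-- The augmented standard dual equivalence graph `G_(λ,A)`, a signed colored
graph of type `(n, N)` on standard tableaux of shape `ρ` (of size `N`)
restricting to `A` on `ρ/λ`, with edges the elementary dual equivalences for
`i-1, i, i+1` with `i < n`. -/
def augDEG (n N : ℕ) (ρ : YoungDiagram) (hρ : ρ.card = N) (A : ℕ → ℕ × ℕ) :
    SCG (AugSYT ρ n A) n N where
  sgn T := sytSgn T.1
  edge i T U := i < n ∧ T ≠ U ∧ (stdEdgeCore ρ i T.1 U.1 ∨ stdEdgeCore ρ i U.1 T.1)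
  sgn_pm := by
    intro v i _ _
    simp only [sytSgn]
    split
    · exact Or.inl rfl
    · exact Or.inr rfl
  edge_symm := by
    rintro i T U ⟨h1, h2, h3⟩
    exact ⟨h1, h2.symm, h3.symm⟩
  edge_ne := fun i T U h => h.2.1
  edge_supp := by
    rintro i T U ⟨h1, h2, h3 | h3⟩ <;> exact ⟨h3.1, h1⟩

end

/-! ### Auxiliary development for Statement 10 -/

noncomputable section Statement10Aux

open Finset

variable {μ : YoungDiagram}

theorem SYT.cell_eq (T : SYT μ) {a : ℕ} (h1 : 1 ≤ a) (h2 : a ≤ μ.card) :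
    T.cell a = T.cellOf ⟨a - 1, by omega⟩ := dif_pos ⟨h1, h2⟩

theorem SYT.cell_mem (T : SYT μ) {a : ℕ} (h1 : 1 ≤ a) (h2 : a ≤ μ.card) :
    T.cell a ∈ μ.cells := by rw [T.cell_eq h1 h2]; exact T.mem_cells _

theorem SYT.cell_inj (T : SYT μ) {a b : ℕ} (ha1 : 1 ≤ a) (ha2 : a ≤ μ.card)
    (hb1 : 1 ≤ b) (hb2 : b ≤ μ.card) (h : T.cell a = T.cell b) : a = b := by
  rw [T.cell_eq ha1 ha2, T.cell_eq hb1 hb2] at h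
  have h2 := congrArg Fin.val (T.inj h)
  simp only at h2
  omega

theorem SYT.ext' {T U : SYT μ} (h : T.cellOf = U.cellOf) : T = U := by
  cases T; cases U; simp only [SYT.mk.injEq]; exact h

theorem SYT.ext_cell {T U : SYT μ} (h : ∀ a, 1 ≤ a → a ≤ μ.card → T.cell a = U.cell a) :
    T = U := by
  apply SYT.ext'
  funext k
  have hk := h (k.1 + 1) (by omega) (by omega)
  rw [T.cell_eq (by omega) (by omega), U.cell_eq (by omega) (by omega)] at hk
  simpa using hk

/-- `k < l` iff cell of `k+1` before cell of `l+1`... replaced by: row_mono in cell form. -/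
theorem SYT.row_mono' (T : SYT μ) {a b : ℕ} (ha1 : 1 ≤ a) (ha2 : a ≤ μ.card)
    (hb1 : 1 ≤ b) (hb2 : b ≤ μ.card) (hrow : (T.cell a).1 = (T.cell b).1)
    (hcol : (T.cell a).2 < (T.cell b).2) : a < b := by
  rw [T.cell_eq ha1 ha2, T.cell_eq hb1 hb2] at hrow hcol
  have := T.row_mono _ _ hrow hcol
  rw [Fin.mk_lt_mk] at this
  omega

theorem SYT.col_mono' (T : SYT μ) {a b : ℕ} (ha1 : 1 ≤ a) (ha2 : a ≤ μ.card)
    (hb1 : 1 ≤ b) (hb2 : b ≤ μ.card) (hcol : (T.cell a).2 = (T.cell b).2)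
    (hrow : (T.cell a).1 < (T.cell b).1) : a < b := by
  rw [T.cell_eq ha1 ha2, T.cell_eq hb1 hb2] at hrow hcol
  have := T.col_mono _ _ hcol hrow
  rw [Fin.mk_lt_mk] at this
  omega

theorem SYT.cell_surj (T : SYT μ) {x : ℕ × ℕ} (hx : x ∈ μ.cells) :
    ∃ a, 1 ≤ a ∧ a ≤ μ.card ∧ T.cell a = x := by
  classical
  let f : Fin μ.card → {y : ℕ × ℕ // y ∈ μ.cells} := fun k => ⟨T.cellOf k, T.mem_cells k⟩
  have hinj : Function.Injective f := by
    intro a b hab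
    exact T.inj (congrArg Subtype.val hab)
  have hcard : Fintype.card (Fin μ.card) = Fintype.card {y : ℕ × ℕ // y ∈ μ.cells} := by
    simp [Fintype.card_coe]
  have hsurj : Function.Surjective f :=
    ((Fintype.bijective_iff_injective_and_card f).2 ⟨hinj, hcard⟩).2
  obtain ⟨k, hk⟩ := hsurj ⟨x, hx⟩
  refine ⟨k.1 + 1, by omega, by omega, ?_⟩
  rw [T.cell_eq (by omega) (by omega)]
  have hkk : (⟨k.1 + 1 - 1, by omega⟩ : Fin μ.card) = k := by ext; simp
  rw [hkk]
  exact congrArg Subtype.val hk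

/-- The entry in a given cell. -/
def SYT.entry (T : SYT μ) (x : ℕ × ℕ) : ℕ :=
  if h : ∃ a, 1 ≤ a ∧ a ≤ μ.card ∧ T.cell a = x then h.choose else 0

theorem SYT.entry_spec (T : SYT μ) {x : ℕ × ℕ} (hx : x ∈ μ.cells) :
    1 ≤ T.entry x ∧ T.entry x ≤ μ.card ∧ T.cell (T.entry x) = x := by
  have h := T.cell_surj hx
  rw [SYT.entry, dif_pos h]
  exact h.choose_spec

theorem SYT.entry_cell (T : SYT μ) {a : ℕ} (h1 : 1 ≤ a) (h2 : a ≤ μ.card) :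
    T.entry (T.cell a) = a := by
  have hs := T.entry_spec (T.cell_mem h1 h2)
  exact T.cell_inj hs.1 hs.2.1 h1 h2 hs.2.2

/-- In a standard tableau, if `σ_i = +1` then the row of `i+1` is at most the row of `i`. -/
theorem SYT.row_le_of_sgn_one (T : SYT μ) {i : ℕ} (h1 : 1 ≤ i) (h2 : i + 1 ≤ μ.card)
    (hs : sytSgn T i = 1) : (T.cell (i + 1)).1 ≤ (T.cell i).1 := by
  by_contra hcon
  push_neg at hcon
  have hrb : readBefore (T.cell i) (T.cell (i + 1)) := by
    by_contra hrb
    rw [sytSgn, if_neg hrb] at hs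
    exact absurd hs (by decide)
  set x := T.cell i with hxdef
  set y := T.cell (i + 1) with hydef
  have hcol : x.2 < y.2 := by
    rcases hrb with h | h
    · rw [cellContent, cellContent] at h; omega
    · exact h.2
  have hz : (x.1, y.2) ∈ μ.cells := by
    rw [YoungDiagram.mem_cells]
    exact μ.up_left_mem (le_of_lt hcon) le_rfl
      ((YoungDiagram.mem_cells _).1 (T.cell_mem (by omega) h2))
  obtain ⟨he1, he2, he3⟩ := T.entry_spec hz
  have hlt1 : i < T.entry (x.1, y.2) :=
    T.row_mono' (by omega) (by omega) he1 he2 (by rw [he3]) (by rw [he3]; exact hcol)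
  have hlt2 : T.entry (x.1, y.2) < i + 1 :=
    T.col_mono' he1 he2 (by omega) h2 (by rw [he3]) (by rw [he3]; exact hcon)
  omega

theorem SYT.row_le_of_run (T : SYT μ) {a b : ℕ} (h1 : 1 ≤ a) (hab : a ≤ b) (h2 : b ≤ μ.card)
    (hrun : ∀ i, a ≤ i → i < b → sytSgn T i = 1) : (T.cell b).1 ≤ (T.cell a).1 := by
  induction b with
  | zero => omega
  | succ b ih =>
    rcases Nat.lt_or_ge a (b + 1) with hlt | hge
    · have hab' : a ≤ b := by omega
      have step := T.row_le_of_sgn_one (i := b) (by omega) h2 (hrun b hab' (by omega))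
      exact le_trans step (ih hab' (by omega) (fun i hi1 hi2 => hrun i hi1 (by omega)))
    · have : a = b + 1 := by omega
      rw [this]

theorem SYT.col_ne_of_run (T : SYT μ) {a b : ℕ} (h1 : 1 ≤ a) (hab : a < b) (h2 : b ≤ μ.card)
    (hrun : ∀ i, a ≤ i → i < b → sytSgn T i = 1) : (T.cell a).2 ≠ (T.cell b).2 := by
  intro hcol
  have hrow := T.row_le_of_run h1 (le_of_lt hab) h2 hrun
  rcases lt_or_eq_of_le hrow with hlt | heq
  · have := T.col_mono' (by omega) h2 h1 (by omega) hcol.symm hlt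
    omega
  · have hcell : T.cell a = T.cell b := Prod.ext heq.symm hcol
    have := T.cell_inj h1 (by omega) (by omega) h2 hcell
    omega

/-- Partial sums of row lengths. -/
def msum (ν : YoungDiagram) (K : ℕ) : ℕ := ∑ j ∈ Finset.range K, ν.rowLen j

theorem msum_succ (ν : YoungDiagram) (K : ℕ) : msum ν (K + 1) = msum ν K + ν.rowLen K :=
  Finset.sum_range_succ _ _

theorem msum_mono (ν : YoungDiagram) {K L : ℕ} (h : K ≤ L) : msum ν K ≤ msum ν L :=
  Finset.sum_le_sum_of_subset (Finset.range_subset_range.2 h)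

theorem row_lt_colLen {ν : YoungDiagram} {x : ℕ × ℕ} (hx : x ∈ ν.cells) :
    x.1 < ν.colLen 0 := by
  rw [← YoungDiagram.mem_iff_lt_colLen]
  exact ν.up_left_mem le_rfl (Nat.zero_le _) ((YoungDiagram.mem_cells x).1 hx)

theorem card_filter_row_lt (ν : YoungDiagram) (K : ℕ) :
    (ν.cells.filter (fun x => x.1 < K)).card = msum ν K := by
  classical
  rw [msum]
  rw [Finset.card_eq_sum_card_fiberwise (f := Prod.fst) (t := Finset.range K)
    (fun x hx => by simp only [Finset.mem_coe, Finset.mem_filter] at hx; simpa using hx.2)]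
  refine Finset.sum_congr rfl fun j hjK => ?_
  rw [YoungDiagram.rowLen_eq_card]
  congr 1
  ext x
  simp only [Finset.mem_filter, YoungDiagram.mem_row_iff, YoungDiagram.mem_cells]
  rw [Finset.mem_range] at hjK
  constructor
  · rintro ⟨⟨hx, _⟩, hj⟩; exact ⟨hx, hj⟩
  · rintro ⟨hx, hj⟩
    exact ⟨⟨hx, by omega⟩, hj⟩

theorem msum_le_card (ν : YoungDiagram) (K : ℕ) : msum ν K ≤ ν.card := by
  rw [← card_filter_row_lt]
  exact Finset.card_filter_le _ _

theorem msum_eq_card {ν : YoungDiagram} {K : ℕ} (h : ν.colLen 0 ≤ K) :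
    msum ν K = ν.card := by
  rw [← card_filter_row_lt]
  congr 1
  apply Finset.filter_true_of_mem
  intro x hx
  exact lt_of_lt_of_le (row_lt_colLen hx) h

/-- The row containing the `(a+1)`-st box in the row-by-row filling. -/
def rowOf (ν : YoungDiagram) (a : ℕ) : ℕ := sInf {j | a < msum ν (j + 1)}

theorem rowOf_mem {ν : YoungDiagram} {a : ℕ} (ha : a < ν.card) :
    a < msum ν (rowOf ν a + 1) := by
  have hne : {j | a < msum ν (j + 1)}.Nonempty :=
    ⟨ν.colLen 0, lt_of_lt_of_le (by rwa [msum_eq_card le_rfl]) (msum_mono _ (by omega))⟩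
  exact Nat.sInf_mem hne

theorem rowOf_le {ν : YoungDiagram} {a j : ℕ} (h : a < msum ν (j + 1)) : rowOf ν a ≤ j :=
  Nat.sInf_le h

theorem msum_rowOf_le {ν : YoungDiagram} {a : ℕ} (ha : a < ν.card) :
    msum ν (rowOf ν a) ≤ a := by
  rcases Nat.eq_zero_or_pos (rowOf ν a) with h0 | h0
  · rw [h0]; exact Nat.zero_le a
  · by_contra hcon
    push_neg at hcon
    have : rowOf ν a ≤ rowOf ν a - 1 := rowOf_le (by
      calc a < msum ν (rowOf ν a) := hcon
      _ = msum ν (rowOf ν a - 1 + 1) := by congr 1; omega)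
    omega

theorem rowOf_eq {ν : YoungDiagram} {a j : ℕ} (h1 : msum ν j ≤ a) (h2 : a < msum ν (j + 1)) :
    rowOf ν a = j := by
  have hle := rowOf_le h2
  rcases lt_or_eq_of_le hle with hlt | heq
  · have hcard : a < ν.card := lt_of_lt_of_le h2 (msum_le_card _ _)
    have := rowOf_mem hcard
    have hmono : msum ν (rowOf ν a + 1) ≤ msum ν j := msum_mono _ (by omega)
    omega
  · exact heq

theorem rowOf_lt_of_lt {ν : YoungDiagram} {a K : ℕ} (h : a < msum ν K) : rowOf ν a < K := by
  have h1 : rowOf ν a ≤ K - 1 := rowOf_le (lt_of_lt_of_le h (msum_mono _ (by omega)))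
  have hK : K ≠ 0 := by rintro rfl; simp [msum] at h
  omega

/-- The "superstandard" (row reading) tableau of a shape. -/
def superSYT (ν : YoungDiagram) : SYT ν where
  cellOf k := (rowOf ν k.1, k.1 - msum ν (rowOf ν k.1))
  mem_cells k := by
    rw [YoungDiagram.mem_cells, YoungDiagram.mem_iff_lt_rowLen]
    have h1 := msum_rowOf_le (ν := ν) (a := k.1) k.2
    have h2 := rowOf_mem (ν := ν) (a := k.1) k.2
    rw [msum_succ] at h2
    omega
  inj := by
    intro k l h
    have hr : rowOf ν k.1 = rowOf ν l.1 := congrArg Prod.fst h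
    have hc : k.1 - msum ν (rowOf ν k.1) = l.1 - msum ν (rowOf ν l.1) := congrArg Prod.snd h
    have h1 := msum_rowOf_le (ν := ν) (a := k.1) k.2
    have h2 := msum_rowOf_le (ν := ν) (a := l.1) l.2
    rw [hr] at h1 hc
    apply Fin.ext
    omega
  row_mono := by
    intro k l hr hc
    simp only at hr hc
    rw [Fin.lt_def]
    have h1 := msum_rowOf_le (ν := ν) (a := k.1) k.2
    have h2 := msum_rowOf_le (ν := ν) (a := l.1) l.2
    rw [hr] at h1 hc
    omega
  col_mono := by
    intro k l hc hr
    simp only at hr hc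
    rw [Fin.lt_def]
    have h2 := msum_rowOf_le (ν := ν) (a := l.1) l.2
    have h3 := rowOf_mem (ν := ν) (a := k.1) k.2
    have h4 : msum ν (rowOf ν k.1 + 1) ≤ msum ν (rowOf ν l.1) := msum_mono _ (by omega)
    omega

theorem superSYT_cell (ν : YoungDiagram) {a : ℕ} (h1 : 1 ≤ a) (h2 : a ≤ ν.card) :
    (superSYT ν).cell a = (rowOf ν (a - 1), a - 1 - msum ν (rowOf ν (a - 1))) := by
  rw [SYT.cell_eq _ h1 h2]
  rfl

theorem superSYT_sgn (ν : YoungDiagram) {i : ℕ} (h1 : 1 ≤ i) (h2 : i + 1 ≤ ν.card)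
    (hns : ∀ k, i ≠ msum ν (k + 1)) : sytSgn (superSYT ν) i = 1 := by
  have hi1 : i - 1 < ν.card := by omega
  have hs1 := msum_rowOf_le (ν := ν) (a := i - 1) hi1
  have hs2 := rowOf_mem (ν := ν) (a := i - 1) hi1
  have hilt : i < msum ν (rowOf ν (i - 1) + 1) := by
    have hle : i ≤ msum ν (rowOf ν (i - 1) + 1) := by omega
    rcases lt_or_eq_of_le hle with h | h
    · exact h
    · exact absurd h (hns _)
  have hrow : rowOf ν i = rowOf ν (i - 1) := rowOf_eq (by omega) hilt
  have hc1 := superSYT_cell ν h1 (by omega)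
  have hc2 := superSYT_cell ν (a := i + 1) (by omega) h2
  rw [Nat.add_sub_cancel, hrow] at hc2
  have hrb : readBefore ((superSYT ν).cell i) ((superSYT ν).cell (i + 1)) := by
    rw [hc1, hc2]
    left
    rw [cellContent, cellContent]
    simp only
    omega
  rw [sytSgn, if_pos hrb]

theorem row_le_rowOf {μ ν : YoungDiagram} (T : SYT μ) (hcard : ν.card ≤ μ.card)
    (hσ : ∀ i, 1 ≤ i → i + 1 ≤ μ.card → (∀ k, i ≠ msum ν (k + 1)) → sytSgn T i = 1) :
    ∀ a, 1 ≤ a → a ≤ ν.card → (T.cell a).1 ≤ rowOf ν (a - 1) := by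
  intro a
  induction a using Nat.strong_induction_on with
  | _ a IH =>
  intro ha1 ham
  rcases Nat.eq_zero_or_pos (T.cell a).1 with h0 | h0
  · rw [h0]; exact Nat.zero_le _
  have hamu : a ≤ μ.card := le_trans ham hcard
  have hpm : ((T.cell a).1, (T.cell a).2) ∈ μ := by
    rw [Prod.mk.eta]
    exact (YoungDiagram.mem_cells _).1 (T.cell_mem ha1 hamu)
  have hzmem : ((T.cell a).1 - 1, (T.cell a).2) ∈ μ.cells :=
    (YoungDiagram.mem_cells _).2 (μ.up_left_mem (Nat.sub_le _ _) le_rfl hpm)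
  obtain ⟨he1, he2, he3⟩ := T.entry_spec hzmem
  set e := T.entry ((T.cell a).1 - 1, (T.cell a).2) with hedef
  have helt : e < a := T.col_mono' he1 he2 ha1 hamu (by rw [he3]) (by rw [he3]; exact Nat.sub_lt h0 Nat.one_pos)
  have hIH : (T.cell e).1 ≤ rowOf ν (e - 1) := IH e helt he1 (by omega)
  have hrowe : (T.cell e).1 = (T.cell a).1 - 1 := by rw [he3]
  have hsa := rowOf_mem (ν := ν) (a := a - 1) (by omega)
  have hmono : rowOf ν (e - 1) ≤ rowOf ν (a - 1) :=
    rowOf_le (lt_of_le_of_lt (Nat.sub_le_sub_right (le_of_lt helt) 1) hsa)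
  have hne : rowOf ν (e - 1) ≠ rowOf ν (a - 1) := by
    intro heq
    have hse := msum_rowOf_le (ν := ν) (a := e - 1) (by omega)
    rw [heq] at hse
    refine T.col_ne_of_run he1 helt hamu ?_ (by rw [he3])
    intro i hie hia
    refine hσ i (by omega) (by omega) ?_
    intro k hk
    rcases le_or_gt (k + 1) (rowOf ν (a - 1)) with h | h
    · have := msum_mono ν h
      omega
    · have := msum_mono ν (show rowOf ν (a - 1) + 1 ≤ k + 1 by omega)
      omega
  omega

theorem msum_le_msum_of_sgn {μ ν : YoungDiagram} (T : SYT μ) (hcard : ν.card ≤ μ.card)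
    (hσ : ∀ i, 1 ≤ i → i + 1 ≤ μ.card → (∀ k, i ≠ msum ν (k + 1)) → sytSgn T i = 1)
    (K : ℕ) : msum ν K ≤ msum μ K := by
  classical
  have hsub : (Finset.Icc 1 (msum ν K)).image T.cell ⊆ μ.cells.filter (fun x => x.1 < K) := by
    intro x hx
    simp only [Finset.mem_image, Finset.mem_Icc] at hx
    obtain ⟨a, ⟨ha1, ha2⟩, rfl⟩ := hx
    have ham : a ≤ ν.card := le_trans ha2 (msum_le_card ν K)
    refine Finset.mem_filter.2 ⟨T.cell_mem ha1 (le_trans ham hcard), ?_⟩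
    have h1 := row_le_rowOf T hcard hσ a ha1 ham
    have hlt : rowOf ν (a - 1) < K := rowOf_lt_of_lt (by omega)
    omega
  have hcardim : ((Finset.Icc 1 (msum ν K)).image T.cell).card = msum ν K := by
    rw [Finset.card_image_of_injOn, Nat.card_Icc]
    · omega
    · intro a ha b hb hab
      simp only [Finset.coe_Icc, Set.mem_Icc] at ha hb
      exact T.cell_inj ha.1 (le_trans ha.2 (le_trans (msum_le_card ν K) hcard))
        hb.1 (le_trans hb.2 (le_trans (msum_le_card ν K) hcard)) hab
  calc msum ν K = ((Finset.Icc 1 (msum ν K)).image T.cell).card := hcardim.symm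
    _ ≤ (μ.cells.filter (fun x => x.1 < K)).card := Finset.card_le_card hsub
    _ = msum μ K := card_filter_row_lt μ K

theorem diagram_eq_of_msum_eq {μ ν : YoungDiagram} (h : ∀ K, msum ν K = msum μ K) :
    ν = μ := by
  have hrow : ∀ j, ν.rowLen j = μ.rowLen j := by
    intro j
    have h1 := h j
    have h2 := h (j + 1)
    rw [msum_succ, msum_succ] at h2
    omega
  ext x
  obtain ⟨i, j⟩ := x
  rw [YoungDiagram.mem_cells, YoungDiagram.mem_cells, YoungDiagram.mem_iff_lt_rowLen,
    YoungDiagram.mem_iff_lt_rowLen, hrow]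

theorem image_Icc_eq_filter {ν : YoungDiagram} (T : SYT ν)
    (hσ : ∀ i, 1 ≤ i → i + 1 ≤ ν.card → (∀ k, i ≠ msum ν (k + 1)) → sytSgn T i = 1)
    (K : ℕ) :
    (Finset.Icc 1 (msum ν K)).image T.cell = ν.cells.filter (fun x => x.1 < K) := by
  classical
  have hsub : (Finset.Icc 1 (msum ν K)).image T.cell ⊆ ν.cells.filter (fun x => x.1 < K) := by
    intro x hx
    simp only [Finset.mem_image, Finset.mem_Icc] at hx
    obtain ⟨a, ⟨ha1, ha2⟩, rfl⟩ := hx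
    have ham : a ≤ ν.card := le_trans ha2 (msum_le_card ν K)
    refine Finset.mem_filter.2 ⟨T.cell_mem ha1 ham, ?_⟩
    have h1 := row_le_rowOf T le_rfl hσ a ha1 ham
    have hlt : rowOf ν (a - 1) < K := rowOf_lt_of_lt (by omega)
    omega
  refine Finset.eq_of_subset_of_card_le hsub ?_
  rw [card_filter_row_lt]
  rw [Finset.card_image_of_injOn, Nat.card_Icc]
  · omega
  · intro a ha b hb hab
    simp only [Finset.coe_Icc, Set.mem_Icc] at ha hb
    exact T.cell_inj ha.1 (le_trans ha.2 (msum_le_card ν K))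
      hb.1 (le_trans hb.2 (msum_le_card ν K)) hab

theorem row_eq_rowOf {ν : YoungDiagram} (T : SYT ν)
    (hσ : ∀ i, 1 ≤ i → i + 1 ≤ ν.card → (∀ k, i ≠ msum ν (k + 1)) → sytSgn T i = 1) :
    ∀ a, 1 ≤ a → a ≤ ν.card → (T.cell a).1 = rowOf ν (a - 1) := by
  intro a ha1 ha2
  have hle := row_le_rowOf T le_rfl hσ a ha1 ha2
  rcases lt_or_eq_of_le hle with hlt | heq
  · exfalso
    have hmem : T.cell a ∈ (Finset.Icc 1 (msum ν (rowOf ν (a - 1)))).image T.cell := by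
      rw [image_Icc_eq_filter T hσ]
      exact Finset.mem_filter.2 ⟨T.cell_mem ha1 ha2, hlt⟩
    simp only [Finset.mem_image, Finset.mem_Icc] at hmem
    obtain ⟨b, ⟨hb1, hb2⟩, hbcell⟩ := hmem
    have hmj := msum_rowOf_le (ν := ν) (a := a - 1) (by omega)
    have hba : b = a := T.cell_inj hb1 (le_trans hb2 (msum_le_card _ _)) ha1 ha2 hbcell
    omega
  · exact heq

theorem eq_superSYT {ν : YoungDiagram} (T : SYT ν)
    (hσ : ∀ i, 1 ≤ i → i + 1 ≤ ν.card → (∀ k, i ≠ msum ν (k + 1)) → sytSgn T i = 1) :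
    T = superSYT ν := by
  classical
  apply SYT.ext_cell
  intro a ha1 ha2
  rw [superSYT_cell ν ha1 ha2]
  have hrow := row_eq_rowOf T hσ a ha1 ha2
  set j := rowOf ν (a - 1) with hjdef
  have hmj : msum ν j ≤ a - 1 := msum_rowOf_le (by omega)
  have hmj2 : a - 1 < msum ν (j + 1) := rowOf_mem (by omega)
  set t := (T.cell a).2 with htdef
  have hrowb : ∀ b, msum ν j + 1 ≤ b → b ≤ a → (T.cell b).1 = j := by
    intro b hb1 hb2
    have hb := row_eq_rowOf T hσ b (by omega) (by omega)
    rw [hb, rowOf_eq (show msum ν j ≤ b - 1 by omega) (show b - 1 < msum ν (j + 1) by omega)]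
  have himg : (Finset.Icc (msum ν j + 1) a).image (fun b => (T.cell b).2)
      = Finset.range (t + 1) := by
    ext c
    simp only [Finset.mem_image, Finset.mem_Icc, Finset.mem_range]
    constructor
    · rintro ⟨b, ⟨hb1, hb2⟩, rfl⟩
      rcases eq_or_lt_of_le hb2 with rfl | hblt
      · omega
      · have hrb := hrowb b hb1 hb2
        by_contra hcon
        push_neg at hcon
        have : a < b := T.row_mono' ha1 ha2 (by omega) (by omega)
          (by rw [hrb, hrow]) (by omega)
        omega
    · intro hc
      have hpa : ((T.cell a).1, (T.cell a).2) ∈ ν := by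
        rw [Prod.mk.eta]
        exact (YoungDiagram.mem_cells _).1 (T.cell_mem ha1 ha2)
      have hmemc : (j, c) ∈ ν.cells := by
        rw [YoungDiagram.mem_cells]
        exact ν.up_left_mem (le_of_eq hrow.symm) (show c ≤ (T.cell a).2 by omega) hpa
      obtain ⟨he1, he2, he3⟩ := T.entry_spec hmemc
      set e := T.entry (j, c) with hedef
      have hre := row_eq_rowOf T hσ e he1 he2
      have hrej : rowOf ν (e - 1) = j := by rw [← hre, he3]
      have l1 : msum ν j ≤ e - 1 := by
        have := msum_rowOf_le (ν := ν) (a := e - 1) (by omega)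
        rwa [hrej] at this
      have hea : e ≤ a := by
        rcases lt_or_ge t c with h | h
        · omega
        rcases eq_or_lt_of_le h with h' | h'
        · have : T.cell e = T.cell a := by
            rw [he3]
            refine Prod.ext ?_ ?_ <;> simp [hrow, htdef, h']
          have := T.cell_inj he1 he2 ha1 ha2 this
          omega
        · have : e < a := T.row_mono' he1 he2 ha1 ha2
            (by rw [he3, hrow]) (by rw [he3]; omega)
          omega
      exact ⟨e, ⟨by omega, hea⟩, by rw [he3]⟩
  have hcount : a - msum ν j = t + 1 := by
    have hinj : Set.InjOn (fun b => (T.cell b).2) (Finset.Icc (msum ν j + 1) a) := by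
      intro b hb b' hb' hbb
      simp only [Finset.coe_Icc, Set.mem_Icc] at hb hb'
      have h1 := hrowb b hb.1 hb.2
      have h2 := hrowb b' hb'.1 hb'.2
      exact T.cell_inj (by omega) (by omega) (by omega) (by omega)
        (Prod.ext (by rw [h1, h2]) hbb)
    have hcards := Finset.card_image_of_injOn hinj
    rw [himg, Finset.card_range, Nat.card_Icc] at hcards
    omega
  have hcella : T.cell a = (j, t) := Prod.ext hrow htdef.symm
  rw [hcella]
  have : t = a - 1 - msum ν j := by omega
  rw [this]

theorem readBefore_asymm {x y : ℕ × ℕ} (h1 : readBefore x y) (h2 : readBefore y x) : False := by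
  rcases h1 with h1 | ⟨h1, h1'⟩ <;> rcases h2 with h2 | ⟨h2, h2'⟩ <;> omega

theorem readBefore_trans {x y z : ℕ × ℕ} (h1 : readBefore x y) (h2 : readBefore y z) :
    readBefore x z := by
  rcases h1 with h1 | ⟨h1, h1'⟩ <;> rcases h2 with h2 | ⟨h2, h2'⟩
  · exact Or.inl (by omega)
  · exact Or.inl (by omega)
  · exact Or.inl (by omega)
  · exact Or.inr ⟨by omega, by omega⟩

theorem stdEdgeCore_symm {T U : SYT μ} {i : ℕ} (h : stdEdgeCore μ i T U) :
    stdEdgeCore μ i U T := by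
  obtain ⟨hi1, hi2, hcase⟩ := h
  refine ⟨hi1, hi2, ?_⟩
  rcases hcase with ⟨hpos, hswap⟩ | ⟨hpos, hswap⟩
  · left
    have e1 : U.cell (i - 1) = T.cell i := by
      rw [hswap (i - 1) (by omega) (by omega), if_pos rfl]
    have e2 : U.cell i = T.cell (i - 1) := by
      rw [hswap i (by omega) (by omega), if_neg (by omega), if_pos rfl]
    have e3 : U.cell (i + 1) = T.cell (i + 1) := by
      rw [hswap (i + 1) (by omega) (by omega), if_neg (by omega), if_neg (by omega)]
    constructor
    · unfold posBetween at hpos ⊢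
      rw [e1, e2, e3]
      tauto
    · intro x hx1 hx2
      by_cases hxa : x = i - 1
      · rw [if_pos hxa, hxa, e2]
      · rw [if_neg hxa]
        by_cases hxb : x = i
        · rw [if_pos hxb, hxb, e1]
        · rw [if_neg hxb, hswap x hx1 hx2, if_neg hxa, if_neg hxb]
  · right
    have e1 : U.cell (i - 1) = T.cell (i - 1) := by
      rw [hswap (i - 1) (by omega) (by omega), if_neg (by omega), if_neg (by omega)]
    have e2 : U.cell i = T.cell (i + 1) := by
      rw [hswap i (by omega) (by omega), if_pos rfl]
    have e3 : U.cell (i + 1) = T.cell i := by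
      rw [hswap (i + 1) (by omega) (by omega), if_neg (by omega), if_pos rfl]
    constructor
    · unfold posBetween at hpos ⊢
      rw [e1, e2, e3]
      tauto
    · intro x hx1 hx2
      by_cases hxa : x = i
      · rw [if_pos hxa, hxa, e3]
      · rw [if_neg hxa]
        by_cases hxb : x = i + 1
        · rw [if_pos hxb, hxb, e2]
        · rw [if_neg hxb, hswap x hx1 hx2, if_neg hxa, if_neg hxb]

theorem stdEdgeCore_unique {T U U' : SYT μ} {i : ℕ} (h : stdEdgeCore μ i T U)
    (h' : stdEdgeCore μ i T U') : U = U' := by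
  obtain ⟨hi1, hi2, hcase⟩ := h
  obtain ⟨_, _, hcase'⟩ := h'
  have hexcl : ¬(posBetween T i (i + 1) (i - 1) ∧ posBetween T i (i - 1) (i + 1)) := by
    rintro ⟨hp1, hp2⟩
    rcases hp1 with ⟨a1, a2⟩ | ⟨a1, a2⟩ <;> rcases hp2 with ⟨b1, b2⟩ | ⟨b1, b2⟩
    · exact readBefore_asymm a2 b2
    · exact readBefore_asymm a1 (readBefore_trans b1 b2)
    · exact readBefore_asymm a2 (readBefore_trans b1 b2)
    · exact readBefore_asymm a1 b1
  rcases hcase with ⟨hpos, hswap⟩ | ⟨hpos, hswap⟩ <;>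
    rcases hcase' with ⟨hpos', hswap'⟩ | ⟨hpos', hswap'⟩
  · exact SYT.ext_cell fun x hx1 hx2 => by rw [hswap x hx1 hx2, hswap' x hx1 hx2]
  · exact absurd ⟨hpos, hpos'⟩ hexcl
  · exact absurd ⟨hpos', hpos⟩ hexcl
  · exact SYT.ext_cell fun x hx1 hx2 => by rw [hswap x hx1 hx2, hswap' x hx1 hx2]

theorem edge_to_core {T U : SYT μ} {i : ℕ}
    (h : T ≠ U ∧ (stdEdgeCore μ i T U ∨ stdEdgeCore μ i U T)) : stdEdgeCore μ i T U := by
  rcases h.2 with h2 | h2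
  · exact h2
  · exact stdEdgeCore_symm h2

/-! #### Corners, erasing a corner, and extending a tableau -/

def CornerOf (ν : YoungDiagram) (x : ℕ × ℕ) : Prop :=
  x ∈ ν.cells ∧ (x.1 + 1, x.2) ∉ ν.cells ∧ (x.1, x.2 + 1) ∉ ν.cells

def eraseCell (ν : YoungDiagram) (x : ℕ × ℕ) (hx : CornerOf ν x) : YoungDiagram where
  cells := ν.cells.erase x
  isLowerSet := by
    intro a b hba ha
    rw [Finset.mem_coe, Finset.mem_erase] at ha ⊢
    obtain ⟨hax, ha⟩ := ha
    have hbmem : b ∈ ν.cells := ν.isLowerSet hba ha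
    refine ⟨?_, hbmem⟩
    rintro rfl
    obtain ⟨hb1, hb2⟩ := hba
    rcases Nat.lt_or_ge b.1 a.1 with h | h
    · exact hx.2.1 ((YoungDiagram.mem_cells _).2
        (ν.up_left_mem h hb2 ((YoungDiagram.mem_cells _).1 (by rwa [Prod.mk.eta]))))
    · have hcol : b.2 < a.2 := by
        rcases Nat.lt_or_ge b.2 a.2 with h' | h'
        · exact h'
        · exact absurd (Prod.ext (by omega) (by omega) : b = a) (fun hh => hax hh.symm)
      exact hx.2.2 ((YoungDiagram.mem_cells _).2
        (ν.up_left_mem hb1 hcol ((YoungDiagram.mem_cells _).1 (by rwa [Prod.mk.eta]))))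

theorem eraseCell_cells (ν : YoungDiagram) (x : ℕ × ℕ) (hx : CornerOf ν x) :
    (eraseCell ν x hx).cells = ν.cells.erase x := rfl

theorem card_eq_of_cells_erase {ν μ : YoungDiagram} {c : ℕ × ℕ} (hc : c ∈ μ.cells)
    (hcells : ν.cells = μ.cells.erase c) : μ.card = ν.card + 1 := by
  have h1 : ν.cells.card = μ.cells.card - 1 := by rw [hcells, Finset.card_erase_of_mem hc]
  have h2 : 0 < μ.cells.card := Finset.card_pos.2 ⟨c, hc⟩
  show μ.cells.card = ν.cells.card + 1
  omega

/-- Extend a tableau by one more (largest) entry at a corner. -/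
def SYT.extend {ν μ : YoungDiagram} (c : ℕ × ℕ) (hc : CornerOf μ c)
    (hcells : ν.cells = μ.cells.erase c) (T : SYT ν) : SYT μ where
  cellOf k := if h : k.1 < ν.card then T.cellOf ⟨k.1, h⟩ else c
  mem_cells k := by
    split
    · next h =>
      have := T.mem_cells ⟨k.1, h⟩
      rw [hcells] at this
      exact Finset.mem_of_mem_erase this
    · exact hc.1
  inj := by
    have hcard := card_eq_of_cells_erase hc.1 hcells
    intro k l h
    dsimp only at h
    split at h <;> split at h
    · next h1 h2 =>
      have h3 : (⟨k.1, h1⟩ : Fin ν.card).1 = (⟨l.1, h2⟩ : Fin ν.card).1 :=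
        congrArg Fin.val (T.inj h)
      exact Fin.ext h3
    · next h1 h2 =>
      exfalso
      have := T.mem_cells ⟨k.1, h1⟩
      rw [hcells, Finset.mem_erase, h] at this
      exact this.1 rfl
    · next h1 h2 =>
      exfalso
      have := T.mem_cells ⟨l.1, h2⟩
      rw [hcells, Finset.mem_erase, ← h] at this
      exact this.1 rfl
    · next h1 h2 => exact Fin.ext (by omega)
  row_mono := by
    intro k l hrow hcol
    rw [Fin.lt_def]
    by_cases h1 : k.1 < ν.card <;> by_cases h2 : l.1 < ν.card
    · rw [dif_pos h1, dif_pos h2] at hrow hcol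
      have := T.row_mono _ _ hrow hcol
      rw [Fin.lt_def] at this
      exact this
    · omega
    · exfalso
      rw [dif_neg h1, dif_pos h2] at hrow hcol
      have hm := T.mem_cells ⟨l.1, h2⟩
      rw [hcells] at hm
      have hm2 : ((T.cellOf ⟨l.1, h2⟩).1, (T.cellOf ⟨l.1, h2⟩).2) ∈ μ := by
        rw [Prod.mk.eta, ← YoungDiagram.mem_cells]
        exact Finset.mem_of_mem_erase hm
      exact hc.2.2 ((YoungDiagram.mem_cells _).2 (μ.up_left_mem (le_of_eq hrow) hcol hm2))
    · rw [dif_neg h1, dif_neg h2] at hcol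
      omega
  col_mono := by
    intro k l hcol hrow
    rw [Fin.lt_def]
    by_cases h1 : k.1 < ν.card <;> by_cases h2 : l.1 < ν.card
    · rw [dif_pos h1, dif_pos h2] at hrow hcol
      have := T.col_mono _ _ hcol hrow
      rw [Fin.lt_def] at this
      exact this
    · omega
    · exfalso
      rw [dif_neg h1, dif_pos h2] at hrow hcol
      have hm := T.mem_cells ⟨l.1, h2⟩
      rw [hcells] at hm
      have hm2 : ((T.cellOf ⟨l.1, h2⟩).1, (T.cellOf ⟨l.1, h2⟩).2) ∈ μ := by
        rw [Prod.mk.eta, ← YoungDiagram.mem_cells]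
        exact Finset.mem_of_mem_erase hm
      exact hc.2.1 ((YoungDiagram.mem_cells _).2 (μ.up_left_mem hrow (le_of_eq hcol) hm2))
    · rw [dif_neg h1, dif_neg h2] at hrow
      omega

theorem SYT.extend_cell_low {ν μ : YoungDiagram} (c : ℕ × ℕ) (hc : CornerOf μ c)
    (hcells : ν.cells = μ.cells.erase c) (T : SYT ν) {a : ℕ} (h1 : 1 ≤ a) (h2 : a ≤ ν.card) :
    (T.extend c hc hcells).cell a = T.cell a := by
  have hcard := card_eq_of_cells_erase hc.1 hcells
  rw [SYT.cell_eq _ h1 (by omega), SYT.cell_eq _ h1 h2]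
  show (if h : a - 1 < ν.card then T.cellOf ⟨a - 1, h⟩ else c) = _
  rw [dif_pos (by omega : a - 1 < ν.card)]

theorem SYT.extend_cell_top {ν μ : YoungDiagram} (c : ℕ × ℕ) (hc : CornerOf μ c)
    (hcells : ν.cells = μ.cells.erase c) (T : SYT ν) :
    (T.extend c hc hcells).cell μ.card = c := by
  have hcard := card_eq_of_cells_erase hc.1 hcells
  rw [SYT.cell_eq _ (by omega) le_rfl]
  show (if h : μ.card - 1 < ν.card then T.cellOf ⟨μ.card - 1, h⟩ else c) = c
  rw [dif_neg (by omega)]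

theorem SYT.extend_ne {ν μ : YoungDiagram} (c : ℕ × ℕ) (hc : CornerOf μ c)
    (hcells : ν.cells = μ.cells.erase c) {T U : SYT ν} (h : T ≠ U) :
    T.extend c hc hcells ≠ U.extend c hc hcells := by
  intro he
  apply h
  apply SYT.ext_cell
  intro a h1 h2
  have h3 := congrArg (fun W => SYT.cell W a) he
  rwa [SYT.extend_cell_low c hc hcells T h1 h2, SYT.extend_cell_low c hc hcells U h1 h2] at h3

/-- One edge of the standard dual equivalence graph (any color). -/
def EStep (μ : YoungDiagram) (T U : SYT μ) : Prop :=
  ∃ i, T ≠ U ∧ (stdEdgeCore μ i T U ∨ stdEdgeCore μ i U T)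

def EReach (μ : YoungDiagram) : SYT μ → SYT μ → Prop := Relation.ReflTransGen (EStep μ)

theorem EStep_symm {T U : SYT μ} (h : EStep μ T U) : EStep μ U T := by
  obtain ⟨i, h1, h2⟩ := h
  exact ⟨i, h1.symm, h2.symm⟩

theorem EReach_symm {T U : SYT μ} (h : EReach μ T U) : EReach μ U T := by
  induction h with
  | refl => exact Relation.ReflTransGen.refl
  | tail _ hbc ih =>
    exact Relation.ReflTransGen.trans (Relation.ReflTransGen.single (EStep_symm hbc)) ih

theorem swapEq_extend {ν μ : YoungDiagram} (c : ℕ × ℕ) (hc : CornerOf μ c)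
    (hcells : ν.cells = μ.cells.erase c) {T U : SYT ν} {a b : ℕ}
    (ha1 : 1 ≤ a) (ha2 : a ≤ ν.card) (hb1 : 1 ≤ b) (hb2 : b ≤ ν.card)
    (h : swapEq T U a b) :
    swapEq (T.extend c hc hcells) (U.extend c hc hcells) a b := by
  have hcard := card_eq_of_cells_erase hc.1 hcells
  intro x hx1 hx2
  by_cases hx : x ≤ ν.card
  · rw [SYT.extend_cell_low c hc hcells U hx1 hx,
      SYT.extend_cell_low c hc hcells T hb1 hb2,
      SYT.extend_cell_low c hc hcells T ha1 ha2,
      SYT.extend_cell_low c hc hcells T hx1 hx]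
    exact h x hx1 hx
  · have hxeq : x = μ.card := by omega
    subst hxeq
    rw [SYT.extend_cell_top, if_neg (by omega), if_neg (by omega), SYT.extend_cell_top]

theorem stdEdgeCore_extend {ν μ : YoungDiagram} (c : ℕ × ℕ) (hc : CornerOf μ c)
    (hcells : ν.cells = μ.cells.erase c) {T U : SYT ν} {i : ℕ}
    (h : stdEdgeCore ν i T U) :
    stdEdgeCore μ i (T.extend c hc hcells) (U.extend c hc hcells) := by
  obtain ⟨hi1, hi2, hcase⟩ := h
  have hcard := card_eq_of_cells_erase hc.1 hcells
  refine ⟨hi1, by omega, ?_⟩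
  have l1 := SYT.extend_cell_low c hc hcells T (a := i - 1) (by omega) (by omega)
  have l2 := SYT.extend_cell_low c hc hcells T (a := i) (by omega) (by omega)
  have l3 := SYT.extend_cell_low c hc hcells T (a := i + 1) (by omega) (by omega)
  rcases hcase with ⟨hpos, hswap⟩ | ⟨hpos, hswap⟩
  · refine Or.inl ⟨?_, swapEq_extend c hc hcells (by omega) (by omega) (by omega)
      (by omega) hswap⟩
    unfold posBetween at hpos ⊢
    rw [l1, l2, l3]
    exact hpos
  · refine Or.inr ⟨?_, swapEq_extend c hc hcells (by omega) (by omega) (by omega)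
      (by omega) hswap⟩
    unfold posBetween at hpos ⊢
    rw [l1, l2, l3]
    exact hpos

theorem EStep_extend {ν μ : YoungDiagram} (c : ℕ × ℕ) (hc : CornerOf μ c)
    (hcells : ν.cells = μ.cells.erase c) {T U : SYT ν} (h : EStep ν T U) :
    EStep μ (T.extend c hc hcells) (U.extend c hc hcells) := by
  obtain ⟨i, hne, hco⟩ := h
  exact ⟨i, SYT.extend_ne c hc hcells hne,
    hco.imp (stdEdgeCore_extend c hc hcells) (stdEdgeCore_extend c hc hcells)⟩

theorem EReach_extend {ν μ : YoungDiagram} (c : ℕ × ℕ) (hc : CornerOf μ c)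
    (hcells : ν.cells = μ.cells.erase c) {T U : SYT ν} (h : EReach ν T U) :
    EReach μ (T.extend c hc hcells) (U.extend c hc hcells) :=
  Relation.ReflTransGen.lift (r := EStep ν) (p := EStep μ) (fun x : SYT ν => SYT.extend c hc hcells x) (fun _ _ hab => EStep_extend c hc hcells hab) _ _ h

theorem SYT.maxcell_corner (T : SYT μ) (hpos : 0 < μ.card) : CornerOf μ (T.cell μ.card) := by
  refine ⟨T.cell_mem (by omega) le_rfl, ?_, ?_⟩
  · intro hmem
    obtain ⟨e1, e2, e3⟩ := T.entry_spec hmem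
    have := T.col_mono' (a := μ.card) (by omega) le_rfl e1 e2
      (by rw [e3]) (by rw [e3]; exact Nat.lt_succ_self _)
    omega
  · intro hmem
    obtain ⟨e1, e2, e3⟩ := T.entry_spec hmem
    have := T.row_mono' (a := μ.card) (by omega) le_rfl e1 e2
      (by rw [e3]) (by rw [e3]; exact Nat.lt_succ_self _)
    omega

theorem exists_restrict {μ ν : YoungDiagram} (T : SYT μ) (hpos : 0 < μ.card) {c : ℕ × ℕ}
    (hceq : T.cell μ.card = c) (hc : CornerOf μ c)
    (hcells : ν.cells = μ.cells.erase c) :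
    ∃ T₀ : SYT ν, T = T₀.extend c hc hcells := by
  subst hceq
  have hcard := card_eq_of_cells_erase hc.1 hcells
  refine ⟨⟨fun k => T.cellOf ⟨k.1, by omega⟩, ?_, ?_, ?_, ?_⟩, ?_⟩
  · intro k
    rw [hcells, Finset.mem_erase]
    refine ⟨?_, T.mem_cells _⟩
    intro heq
    rw [T.cell_eq (by omega) le_rfl] at heq
    have h2 := congrArg Fin.val (T.inj heq)
    simp only at h2
    omega
  · intro k l h
    have h2 := congrArg Fin.val (T.inj h)
    simp only at h2
    exact Fin.ext h2
  · intro k l hr hcl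
    have := T.row_mono _ _ hr hcl
    rw [Fin.lt_def] at this ⊢
    simpa using this
  · intro k l hcl hr
    have := T.col_mono _ _ hcl hr
    rw [Fin.lt_def] at this ⊢
    simpa using this
  · apply SYT.ext'
    funext k
    show T.cellOf k = if h : k.1 < ν.card then T.cellOf ⟨k.1, by omega⟩ else T.cell μ.card
    by_cases hk : k.1 < ν.card
    · rw [dif_pos hk]
    · rw [dif_neg hk, T.cell_eq (by omega) le_rfl]
      congr 1
      ext
      simp only
      omega

theorem rowLen_eq_of {ν : YoungDiagram} {j L : ℕ} (h : ∀ t, (j, t) ∈ ν ↔ t < L) :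
    ν.rowLen j = L := by
  rcases Nat.lt_trichotomy (ν.rowLen j) L with h1 | h1 | h1
  · have h2 := (h _).2 h1
    rw [YoungDiagram.mem_iff_lt_rowLen] at h2
    omega
  · exact h1
  · have h2 := (h L).1 (YoungDiagram.mem_iff_lt_rowLen.2 h1)
    omega

theorem cornerOf_iff {ν : YoungDiagram} {j t : ℕ} :
    CornerOf ν (j, t) ↔ t + 1 = ν.rowLen j ∧ ν.rowLen (j + 1) ≤ t := by
  unfold CornerOf
  rw [YoungDiagram.mem_cells, YoungDiagram.mem_cells, YoungDiagram.mem_cells]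
  show (j, t) ∈ ν ∧ (j + 1, t) ∉ ν ∧ (j, t + 1) ∉ ν ↔ _
  rw [YoungDiagram.mem_iff_lt_rowLen, YoungDiagram.mem_iff_lt_rowLen,
    YoungDiagram.mem_iff_lt_rowLen]
  have := ν.rowLen_anti j (j + 1) (by omega)
  omega

def rmaxD (ν : YoungDiagram) : ℕ := ν.colLen 0 - 1

theorem rowLen_pos_iff {ν : YoungDiagram} {j : ℕ} : 0 < ν.rowLen j ↔ j < ν.colLen 0 := by
  rw [← YoungDiagram.mem_iff_lt_colLen, YoungDiagram.mem_iff_lt_rowLen]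

theorem colLen_pos {ν : YoungDiagram} (hpos : 0 < ν.card) : 0 < ν.colLen 0 := by
  obtain ⟨x, hx⟩ := Finset.card_pos.1 hpos
  exact lt_of_le_of_lt (Nat.zero_le _) (row_lt_colLen hx)

theorem rowLen_rmax_pos {ν : YoungDiagram} (hpos : 0 < ν.card) : 0 < ν.rowLen (rmaxD ν) := by
  rw [rowLen_pos_iff, rmaxD]
  have := colLen_pos hpos
  omega

theorem rowLen_rmax_succ (ν : YoungDiagram) : ν.rowLen (rmaxD ν + 1) = 0 := by
  by_contra h
  have h2 : 0 < ν.rowLen (rmaxD ν + 1) := Nat.pos_of_ne_zero h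
  rw [rowLen_pos_iff, rmaxD] at h2
  omega

theorem row_le_rmax {ν : YoungDiagram} {x : ℕ × ℕ} (hx : x ∈ ν.cells) : x.1 ≤ rmaxD ν := by
  have h1 := row_lt_colLen hx
  rw [rmaxD]
  omega

def cZero (ν : YoungDiagram) : ℕ × ℕ := (rmaxD ν, ν.rowLen (rmaxD ν) - 1)

theorem cZero_corner {ν : YoungDiagram} (hpos : 0 < ν.card) : CornerOf ν (cZero ν) := by
  have h1 := rowLen_rmax_pos hpos
  have h2 := rowLen_rmax_succ ν
  exact cornerOf_iff.2 ⟨by omega, by omega⟩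

theorem corner_row_eq_cZero {ν : YoungDiagram} {x : ℕ × ℕ} (hx : CornerOf ν x)
    (hrow : x.1 = rmaxD ν) : x = cZero ν := by
  obtain ⟨j, t⟩ := x
  simp only at hrow
  subst hrow
  obtain ⟨h1, _⟩ := cornerOf_iff.1 hx
  rw [cZero]
  exact Prod.ext rfl (by omega)

theorem eraseCell_rowLen {ν : YoungDiagram} {x : ℕ × ℕ} (hx : CornerOf ν x) (j : ℕ) :
    (eraseCell ν x hx).rowLen j = if j = x.1 then ν.rowLen j - 1 else ν.rowLen j := by
  obtain ⟨r, s⟩ := x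
  obtain ⟨hc1, hc2⟩ := cornerOf_iff.1 hx
  apply rowLen_eq_of
  intro t
  rw [← YoungDiagram.mem_cells, eraseCell_cells, Finset.mem_erase, YoungDiagram.mem_cells,
    YoungDiagram.mem_iff_lt_rowLen]
  by_cases hj : j = r
  · subst hj
    rw [if_pos rfl]
    constructor
    · rintro ⟨hne, hlt⟩
      have hts : t ≠ s := fun h => hne (by rw [h])
      omega
    · intro hlt
      exact ⟨fun h => by injection h with h1 h2; omega, by omega⟩
  · rw [if_neg hj]
    constructor
    · rintro ⟨_, hlt⟩; exact hlt
    · intro hlt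
      exact ⟨fun h => by injection h with h1 h2; omega, hlt⟩

theorem eraseCell_msum_le {ν : YoungDiagram} {x : ℕ × ℕ} (hx : CornerOf ν x) {K : ℕ}
    (hK : K ≤ x.1) : msum (eraseCell ν x hx) K = msum ν K := by
  refine Finset.sum_congr rfl fun j hj => ?_
  rw [Finset.mem_range] at hj
  rw [eraseCell_rowLen hx, if_neg (by omega)]

theorem eraseCell_msum_gt {ν : YoungDiagram} {x : ℕ × ℕ} (hx : CornerOf ν x) {K : ℕ}
    (hK : x.1 < K) : msum (eraseCell ν x hx) K = msum ν K - 1 := by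
  have hxm : (x.1, x.2) ∈ ν := by
    rw [Prod.mk.eta]
    exact (YoungDiagram.mem_cells _).1 hx.1
  have hxpos : 0 < ν.rowLen x.1 := by
    rw [← YoungDiagram.mem_iff_lt_rowLen]
    exact ν.up_left_mem le_rfl (Nat.zero_le _) hxm
  have hmx : msum ν (x.1 + 1) = msum ν x.1 + ν.rowLen x.1 := msum_succ ν x.1
  induction K with
  | zero => omega
  | succ K ih =>
    rw [msum_succ, msum_succ, eraseCell_rowLen hx]
    rcases Nat.lt_or_ge x.1 K with h | h
    · rw [if_neg (by omega), ih h]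
      have h2 : 1 ≤ msum ν K :=
        le_trans (show 1 ≤ msum ν (x.1 + 1) by omega)
          (msum_mono ν (show x.1 + 1 ≤ K by omega))
      omega
    · have hxK : K = x.1 := by omega
      subst hxK
      rw [if_pos rfl, eraseCell_msum_le hx le_rfl]
      omega

theorem superSYT_extend (μ : YoungDiagram) (hpos : 0 < μ.card) :
    (superSYT (eraseCell μ (cZero μ) (cZero_corner hpos))).extend (cZero μ)
      (cZero_corner hpos) rfl = superSYT μ := by
  set ν := eraseCell μ (cZero μ) (cZero_corner hpos) with hν
  have hcard : μ.card = ν.card + 1 := card_eq_of_cells_erase (cZero_corner hpos).1 rfl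
  have hr0 : msum μ (rmaxD μ + 1) = μ.card := msum_eq_card (by rw [rmaxD]; omega)
  have hrpos := rowLen_rmax_pos hpos
  have hcz : (cZero μ).1 = rmaxD μ := rfl
  apply SYT.ext_cell
  intro a ha1 ha2
  by_cases ha : a ≤ ν.card
  · erw [SYT.extend_cell_low _ _ _ _ ha1 ha, superSYT_cell _ ha1 ha, superSYT_cell _ ha1 ha2]
    have hma : a - 1 < μ.card := by omega
    set j := rowOf μ (a - 1) with hjdef
    have hj1 : msum μ j ≤ a - 1 := msum_rowOf_le hma
    have hj2 : a - 1 < msum μ (j + 1) := rowOf_mem hma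
    have hjr : j ≤ rmaxD μ := by
      have := rowOf_lt_of_lt (ν := μ) (a := a - 1) (K := rmaxD μ + 1) (by omega)
      omega
    have hmj : msum ν j = msum μ j := eraseCell_msum_le _ (by exact hjr)
    have hj2' : a - 1 < msum ν (j + 1) := by
      rcases Nat.lt_or_ge j (rmaxD μ) with h | h
      · rw [eraseCell_msum_le _ (show j + 1 ≤ (cZero μ).1 by exact h)]
        exact hj2
      · have hjeq : j = rmaxD μ := by omega
        rw [eraseCell_msum_gt _ (show (cZero μ).1 < j + 1 by omega), hjeq]
        have hle : msum μ (rmaxD μ + 1) ≤ μ.card := msum_le_card μ _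
        omega
    have hrv : rowOf ν (a - 1) = j := rowOf_eq (by omega) hj2'
    rw [hrv, hmj]
  · have haeq : a = μ.card := by omega
    subst haeq
    erw [SYT.extend_cell_top, superSYT_cell _ ha1 le_rfl]
    have hj1 : msum μ (rmaxD μ) ≤ μ.card - 1 := by
      have := msum_succ μ (rmaxD μ)
      omega
    have hrv : rowOf μ (μ.card - 1) = rmaxD μ := rowOf_eq hj1 (by omega)
    rw [hrv, cZero]
    have := msum_succ μ (rmaxD μ)
    exact Prod.ext rfl (by simp only; omega)

theorem cornerOf_erase {μ : YoungDiagram} {c c' : ℕ × ℕ} (hc : CornerOf μ c)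
    (hc' : CornerOf μ c') (hne : c' ≠ c) : CornerOf (eraseCell μ c hc) c' := by
  refine ⟨Finset.mem_erase.2 ⟨hne, hc'.1⟩, ?_, ?_⟩
  · intro h; exact hc'.2.1 (Finset.mem_of_mem_erase h)
  · intro h; exact hc'.2.2 (Finset.mem_of_mem_erase h)

theorem move_step {μ : YoungDiagram} (N : ℕ) (hN : μ.card = N)
    (IH : ∀ M, M < N → ∀ (ρ : YoungDiagram), ρ.card = M → ∀ A B : SYT ρ, EReach ρ A B)
    (T : SYT μ) (hpos : 0 < μ.card) (hrlt : (T.cell μ.card).1 < rmaxD μ) :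
    ∃ W' : SYT μ, EReach μ T W' ∧ (T.cell μ.card).1 < (W'.cell μ.card).1 ∧
      (W'.cell μ.card).1 ≤ rmaxD μ := by
  classical
  obtain ⟨c, hcdef⟩ : ∃ x, T.cell μ.card = x := ⟨_, rfl⟩
  have hc : CornerOf μ c := hcdef ▸ T.maxcell_corner hpos
  rw [hcdef] at hrlt ⊢
  obtain ⟨r, s⟩ := c
  obtain ⟨hc1, hc2⟩ := cornerOf_iff.1 hc
  have hrlt' : r < rmaxD μ := hrlt
  -- the next corner row below r
  obtain ⟨r'', hr''1, hr''2, hr''max, hr''min⟩ :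
      ∃ r'', r < r'' ∧ μ.rowLen (r'' + 1) < μ.rowLen r'' ∧ r'' ≤ rmaxD μ ∧
        ∀ j, r < j → j < r'' → μ.rowLen (j + 1) = μ.rowLen j := by
    have hSne : rmaxD μ ∈ {j | r < j ∧ μ.rowLen (j + 1) < μ.rowLen j} := by
      refine ⟨hrlt', ?_⟩
      rw [rowLen_rmax_succ]
      exact rowLen_rmax_pos hpos
    obtain ⟨h1, h2⟩ := Nat.sInf_mem (⟨_, hSne⟩ :
      {j | r < j ∧ μ.rowLen (j + 1) < μ.rowLen j}.Nonempty)
    refine ⟨_, h1, h2, Nat.sInf_le hSne, ?_⟩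
    intro j hj1 hj2
    have hnm := Nat.notMem_of_lt_sInf hj2
    simp only [Set.mem_setOf_eq] at hnm
    have hanti := μ.rowLen_anti j (j + 1) (by omega)
    omega
  -- row lengths are constant between r+1 and r''
  have chain : ∀ e j, r + 1 ≤ j → j + e = r'' → μ.rowLen j = μ.rowLen r'' := by
    intro e
    induction e with
    | zero => intro j h1 h2; rw [show j = r'' by omega]
    | succ e ihe =>
      intro j h1 h2
      have hnc := hr''min j (by omega) (by omega)
      have h3 := ihe (j + 1) (by omega) (by omega)
      omega
  have hchain1 : μ.rowLen (r + 1) = μ.rowLen r'' :=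
    chain (r'' - (r + 1)) (r + 1) le_rfl (by omega)
  obtain ⟨s'', hs''eq⟩ : ∃ s'', μ.rowLen r'' - 1 = s'' := ⟨_, rfl⟩
  have hs''row : s'' + 1 = μ.rowLen r'' := by omega
  have hc''μ : CornerOf μ (r'', s'') := cornerOf_iff.2 ⟨by omega, by omega⟩
  have hs''s : s'' < s := by omega
  have hne_cc : (r'', s'') ≠ (r, s) := by
    intro h
    injection h with h1 h2
    omega
  -- cardinality facts
  have h3card : 3 ≤ μ.card := by
    have hsub : ({(r, s), (r'', s''), (r, s'')} : Finset (ℕ × ℕ)) ⊆ μ.cells := by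
      intro y hy
      simp only [Finset.mem_insert, Finset.mem_singleton] at hy
      rcases hy with rfl | rfl | rfl
      · exact hc.1
      · exact hc''μ.1
      · rw [YoungDiagram.mem_cells, YoungDiagram.mem_iff_lt_rowLen]; omega
    have hcard3 : ({(r, s), (r'', s''), (r, s'')} : Finset (ℕ × ℕ)).card = 3 := by
      rw [Finset.card_insert_of_notMem, Finset.card_insert_of_notMem,
        Finset.card_singleton]
      · simp only [Finset.mem_singleton]
        intro h; injection h with h1 h2; omega
      · simp only [Finset.mem_insert, Finset.mem_singleton]
        rintro (h | h) <;> (injection h with h1 h2; omega)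
    have h4 := Finset.card_le_card hsub
    have h5 : μ.card = μ.cells.card := rfl
    omega
  -- the three diagrams
  set ν₁ := eraseCell μ (r, s) hc with hν₁def
  have hc''₁ : CornerOf ν₁ (r'', s'') := cornerOf_erase hc hc''μ hne_cc
  set ν₂ := eraseCell ν₁ (r'', s'') hc''₁ with hν₂def
  have hν₁card : μ.card = ν₁.card + 1 := card_eq_of_cells_erase hc.1 rfl
  have hν₂card : ν₁.card = ν₂.card + 1 := card_eq_of_cells_erase hc''₁.1 rfl
  have mem_ν₂ : ∀ y : ℕ × ℕ, y ∈ ν₂.cells ↔ y ∈ μ.cells ∧ y ≠ (r, s) ∧ y ≠ (r'', s'') := by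
    intro y
    show y ∈ (μ.cells.erase (r, s)).erase (r'', s'') ↔ _
    rw [Finset.mem_erase, Finset.mem_erase]
    tauto
  -- the intermediate corner d
  obtain ⟨d, hd₂, hct1, hct2⟩ : ∃ d, CornerOf ν₂ d ∧
      cellContent (r'', s'') < cellContent d ∧ cellContent d < cellContent (r, s) := by
    rcases eq_or_lt_of_le (show s'' + 1 ≤ s by omega) with hcase | hcase
    · -- d = (r'' - 1, s'')
      have hdrow : s'' < μ.rowLen (r'' - 1) := by
        by_cases h : r'' - 1 = r
        · rw [h]; omega
        · have := chain (r'' - (r'' - 1)) (r'' - 1) (by omega) (by omega)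
          omega
      have hdright : (r'' - 1, s'' + 1) ∈ μ → r'' - 1 = r ∧ s'' + 1 = s := by
        intro hmem
        rw [YoungDiagram.mem_iff_lt_rowLen] at hmem
        by_cases h : r'' - 1 = r
        · exact ⟨h, by omega⟩
        · have := chain (r'' - (r'' - 1)) (r'' - 1) (by omega) (by omega)
          omega
      refine ⟨(r'' - 1, s''), ⟨?_, ?_, ?_⟩, ?_, ?_⟩
      · rw [mem_ν₂]
        refine ⟨?_, ?_, ?_⟩
        · rw [YoungDiagram.mem_cells, YoungDiagram.mem_iff_lt_rowLen]
          exact hdrow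
        · intro h
          injection h with h1 h2
          omega
        · intro h
          injection h with h1 h2
          omega
      · intro hmem
        rw [mem_ν₂] at hmem
        have heq : (r'' - 1 + 1, s'') = (r'', s'') := by
          rw [Prod.mk.injEq]
          omega
        rw [heq] at hmem
        exact hmem.2.2 rfl
      · intro hmem
        rw [mem_ν₂] at hmem
        obtain ⟨h1, h2⟩ := hdright ((YoungDiagram.mem_cells _).1 hmem.1)
        exact hmem.2.1 (by rw [Prod.mk.injEq]; exact ⟨h1, h2⟩)
      · show (s'' : ℤ) - (r'' : ℤ) < (s'' : ℤ) - ((r'' - 1 : ℕ) : ℤ)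
        omega
      · show (s'' : ℤ) - ((r'' - 1 : ℕ) : ℤ) < (s : ℤ) - (r : ℤ)
        omega
    · -- d = (r, s - 1)
      refine ⟨(r, s - 1), ⟨?_, ?_, ?_⟩, ?_, ?_⟩
      · rw [mem_ν₂]
        refine ⟨?_, ?_, ?_⟩
        · rw [YoungDiagram.mem_cells, YoungDiagram.mem_iff_lt_rowLen]
          omega
        · intro h
          injection h with h1 h2
          omega
        · intro h
          injection h with h1 h2
          omega
      · intro hmem
        rw [mem_ν₂] at hmem
        have hm := (YoungDiagram.mem_cells _).1 hmem.1
        rw [YoungDiagram.mem_iff_lt_rowLen] at hm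
        have hm2 : s - 1 < μ.rowLen (r + 1) := hm
        omega
      · intro hmem
        rw [mem_ν₂] at hmem
        have heq : (r, s - 1 + 1) = (r, s) := by
          rw [Prod.mk.injEq]
          omega
        rw [heq] at hmem
        exact hmem.2.1 rfl
      · show (s'' : ℤ) - (r'' : ℤ) < ((s - 1 : ℕ) : ℤ) - (r : ℤ)
        omega
      · show ((s - 1 : ℕ) : ℤ) - (r : ℤ) < (s : ℤ) - (r : ℤ)
        omega
  set ν₃ := eraseCell ν₂ d hd₂ with hν₃def
  have hν₃card : ν₂.card = ν₃.card + 1 := card_eq_of_cells_erase hd₂.1 rfl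
  -- the tableaux W and W'
  set W₂ : SYT ν₂ := (superSYT ν₃).extend d hd₂ rfl with hW₂def
  set W₁ : SYT ν₁ := W₂.extend (r'', s'') hc''₁ rfl with hW₁def
  set W : SYT μ := W₁.extend (r, s) hc rfl with hWdef
  have hc''ne : (r, s) ≠ (r'', s'') := fun h => hne_cc h.symm
  set ν₁' := eraseCell μ (r'', s'') hc''μ with hν₁'def
  have hcν₁' : CornerOf ν₁' (r, s) := cornerOf_erase hc''μ hc hc''ne
  have hν₁'card : μ.card = ν₁'.card + 1 := card_eq_of_cells_erase hc''μ.1 rfl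
  have hcellscomm : ν₂.cells = ν₁'.cells.erase (r, s) := by
    show (μ.cells.erase (r, s)).erase (r'', s'') = (μ.cells.erase (r'', s'')).erase (r, s)
    exact Finset.erase_right_comm
  set W₁' : SYT ν₁' := W₂.extend (r, s) hcν₁' hcellscomm with hW₁'def
  set W' : SYT μ := W₁'.extend (r'', s'') hc''μ rfl with hW'def
  -- cells of W and W'
  have hWn : W.cell μ.card = (r, s) := SYT.extend_cell_top _ _ _ _
  have hW'n : W'.cell μ.card = (r'', s'') := SYT.extend_cell_top _ _ _ _
  have hWn1 : W.cell (μ.card - 1) = (r'', s'') := by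
    erw [SYT.extend_cell_low _ _ _ _ (by omega) (by omega)]
    have htop := SYT.extend_cell_top (r'', s'') hc''₁ rfl W₂
    rwa [show ν₁.card = μ.card - 1 by omega] at htop
  have hW'n1 : W'.cell (μ.card - 1) = (r, s) := by
    erw [SYT.extend_cell_low _ _ _ _ (by omega) (by omega)]
    have htop := SYT.extend_cell_top (r, s) hcν₁' hcellscomm W₂
    rwa [show ν₁'.card = μ.card - 1 by omega] at htop
  have hWn2 : W.cell (μ.card - 2) = d := by
    erw [SYT.extend_cell_low _ _ _ _ (by omega) (by omega),
      SYT.extend_cell_low _ _ _ _ (by omega) (by omega)]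
    have htop := SYT.extend_cell_top d hd₂ rfl (superSYT ν₃)
    rwa [show ν₂.card = μ.card - 2 by omega] at htop
  have hWlow : ∀ x, 1 ≤ x → x ≤ μ.card - 2 → W.cell x = W₂.cell x := by
    intro x h1 h2
    erw [SYT.extend_cell_low _ _ _ _ h1 (by omega), SYT.extend_cell_low _ _ _ _ h1 (by omega)]
  have hW'low : ∀ x, 1 ≤ x → x ≤ μ.card - 2 → W'.cell x = W₂.cell x := by
    intro x h1 h2
    erw [SYT.extend_cell_low _ _ _ _ h1 (by omega), SYT.extend_cell_low _ _ _ _ h1 (by omega)]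
  -- the edge between W and W'
  have hcore : stdEdgeCore μ (μ.card - 1) W W' := by
    refine ⟨by omega, by omega, Or.inr ⟨?_, ?_⟩⟩
    · unfold posBetween
      rw [show μ.card - 1 - 1 = μ.card - 2 by omega, show μ.card - 1 + 1 = μ.card by omega,
        hWn1, hWn2, hWn]
      exact Or.inl ⟨Or.inl hct1, Or.inl hct2⟩
    · rw [show μ.card - 1 + 1 = μ.card by omega]
      intro x hx1 hx2
      by_cases hxa : x = μ.card - 1
      · rw [if_pos hxa, hxa, hW'n1, hWn]
      · rw [if_neg hxa]
        by_cases hxb : x = μ.card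
        · rw [if_pos hxb, hxb, hW'n, hWn1]
        · rw [if_neg hxb, hWlow x hx1 (by omega), hW'low x hx1 (by omega)]
  have hWne : W ≠ W' := by
    intro h
    have h2 : W.cell μ.card = W'.cell μ.card := by rw [h]
    rw [hWn, hW'n] at h2
    injection h2 with h1 _
    omega
  have hstep : EStep μ W W' := ⟨μ.card - 1, hWne, Or.inl hcore⟩
  -- connect T to W
  obtain ⟨T₀, hT⟩ := exists_restrict T hpos hcdef hc (rfl : ν₁.cells = μ.cells.erase (r, s))
  have hreach1 : EReach ν₁ T₀ W₁ := IH ν₁.card (by omega) ν₁ rfl T₀ W₁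
  have hreach2 : EReach μ T W := by
    rw [hT]
    exact EReach_extend (r, s) hc rfl hreach1
  refine ⟨W', hreach2.tail hstep, ?_, ?_⟩
  · rw [hW'n]
    exact hr''1
  · rw [hW'n]
    exact hr''max

theorem conn (N : ℕ) : ∀ (μ : YoungDiagram), μ.card = N → ∀ A B : SYT μ, EReach μ A B := by
  induction N using Nat.strong_induction_on with
  | _ N IH =>
  have key : ∀ (μ : YoungDiagram), μ.card = N → ∀ T : SYT μ, EReach μ T (superSYT μ) := by
    intro μ hN
    rcases Nat.eq_zero_or_pos N with h0 | h0
    · intro T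
      have hTs : T = superSYT μ := SYT.ext_cell (fun a h1 h2 => by omega)
      rw [hTs]
      exact Relation.ReflTransGen.refl
    · have hpos : 0 < μ.card := by omega
      have atTop : ∀ T : SYT μ, (T.cell μ.card).1 = rmaxD μ → EReach μ T (superSYT μ) := by
        intro T hr
        have hc := T.maxcell_corner hpos
        have hcz : T.cell μ.card = cZero μ := corner_row_eq_cZero hc hr
        obtain ⟨T₀, hT⟩ := exists_restrict T hpos hcz (cZero_corner hpos)
          (rfl : (eraseCell μ (cZero μ) (cZero_corner hpos)).cells = μ.cells.erase (cZero μ))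
        have hν : (eraseCell μ (cZero μ) (cZero_corner hpos)).card = N - 1 := by
          have := card_eq_of_cells_erase (cZero_corner hpos).1
            (rfl : (eraseCell μ (cZero μ) (cZero_corner hpos)).cells
              = μ.cells.erase (cZero μ))
          omega
        have hreach := IH (N - 1) (by omega) _ hν T₀ (superSYT _)
        have h2 := EReach_extend (cZero μ) (cZero_corner hpos) rfl hreach
        rw [superSYT_extend μ hpos] at h2
        rw [hT]
        exact h2
      have inner : ∀ m (T : SYT μ), rmaxD μ - (T.cell μ.card).1 ≤ m →
          EReach μ T (superSYT μ) := by
        intro m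
        induction m with
        | zero =>
          intro T hm
          have hrow : (T.cell μ.card).1 = rmaxD μ := by
            have := row_le_rmax (T.cell_mem (by omega) le_rfl)
            omega
          exact atTop T hrow
        | succ m ihm =>
          intro T hm
          rcases Nat.lt_or_ge (T.cell μ.card).1 (rmaxD μ) with hlt | hge
          · obtain ⟨W', hreach, hm1, hm2⟩ := move_step N hN
              (fun M hM ρ hρ A B => IH M hM ρ hρ A B) T hpos hlt
            exact hreach.trans (ihm W' (by omega))
          · have hrow : (T.cell μ.card).1 = rmaxD μ := by
              have := row_le_rmax (T.cell_mem (by omega) le_rfl)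
              omega
            exact atTop T hrow
      intro T
      exact inner (rmaxD μ) T (by omega)
  intro μ hN A B
  exact (key μ hN A).trans (EReach_symm (key μ hN B))

end Statement10Aux

/-- If `λ` and `μ` are partitions of `n` and
`φ : G_λ → G_μ` is an isomorphism of signed colored graphs between the
standard dual equivalence graphs, then `λ = μ` and `φ` is the identity. -/
theorem statement10 (n : ℕ) (lam mu : YoungDiagram) (hl : lam.card = n) (hm : mu.card = n)
    (φ : SYT lam → SYT mu)
    (hmor : SCG.IsMorphism (stdDEG n lam hl) (stdDEG n mu hm) φ)
    (hbij : Function.Bijective φ) :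
    ∃ h : lam = mu, ∀ T : SYT lam, φ T = h ▸ T := by
  classical
  have hsgn : ∀ (T : SYT lam) i, 1 ≤ i → i < n → sytSgn (φ T) i = sytSgn T i := by
    intro T i h1 h2
    exact hmor.1 T i h1 h2
  have hcards : lam.card = mu.card := by rw [hl, hm]
  have hdom1 : ∀ K, msum lam K ≤ msum mu K := by
    intro K
    apply msum_le_msum_of_sgn (φ (superSYT lam)) (le_of_eq hcards)
    intro i hi1 hi2 hns
    rw [hsgn _ i hi1 (by omega)]
    exact superSYT_sgn lam hi1 (by omega) hns
  have hdom2 : ∀ K, msum mu K ≤ msum lam K := by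
    intro K
    obtain ⟨T, hT⟩ := hbij.2 (superSYT mu)
    apply msum_le_msum_of_sgn T (le_of_eq hcards.symm)
    intro i hi1 hi2 hns
    rw [← hsgn T i hi1 (by omega), hT]
    exact superSYT_sgn mu hi1 (by omega) hns
  have heq : lam = mu := diagram_eq_of_msum_eq fun K => le_antisymm (hdom1 K) (hdom2 K)
  subst heq
  refine ⟨rfl, ?_⟩
  have hfix : φ (superSYT lam) = superSYT lam := by
    apply eq_superSYT
    intro i h1 h2 hns
    rw [hsgn _ i h1 (by omega)]
    exact superSYT_sgn lam h1 h2 hns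
  have hprop : ∀ A B : SYT lam, EReach lam A B → φ A = A → φ B = B := by
    intro A B hreach
    induction hreach with
    | refl => exact id
    | @tail b c hAb hstep ih =>
      intro hA
      have hb : φ b = b := ih hA
      obtain ⟨i, hne, hco⟩ := hstep
      have hedge : (stdDEG n lam hl).edge i b c := ⟨hne, hco⟩
      have hedge2 := hmor.2 i _ _ hedge
      rw [hb] at hedge2
      have hcore1 : stdEdgeCore lam i b c := edge_to_core hedge
      have hcore2 : stdEdgeCore lam i b (φ c) := edge_to_core hedge2
      exact (stdEdgeCore_unique hcore1 hcore2).symm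
  intro T
  show φ T = T
  exact hprop (superSYT lam) T (conn n lam hl (superSYT lam) T) hfix
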